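/- arXiv:1404.3155 — 3 statements merged into one kernel-verified Lean document; each statement's English description precedes it below -/
import Mathlib

section
/- For every positive integer k, a finite simple graph has spaghetti treewidth at most k if and only if every block of it has spaghetti treewidth at most k. -/
open SimpleGraph

/-- The cycle graph on `ZMod n` (for `3 ≤ n` this is a cycle of length `n`). -/
def cycGraph (n : ℕ) : SimpleGraph (ZMod n) :=
  SimpleGraph.fromRel (fun x y => x = y + 1)

/-- The set `s` of nodes induces a path in the graph `H`. -/
def IsPathSet {ι : Type} (H : SimpleGraph ι) (s : Set ι) : Prop :=
  (H.induce s).Connected ∧ ∀ x ∈ s, {y | y ∈ s ∧ H.Adj x y}.ncard ≤ 2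

/-- The set `s` of nodes induces a directed path in `H` with respect to the
orientation `o` of the edges of `H`. -/
def IsDirPathSet {ι : Type} (H : SimpleGraph ι) (o : ι → ι → Prop) (s : Set ι) : Prop :=
  IsPathSet H s ∧ (∀ x ∈ s, {y | y ∈ s ∧ o x y}.ncard ≤ 1) ∧
    (∀ x ∈ s, {y | y ∈ s ∧ o y x}.ncard ≤ 1)

/-- A tree decomposition of a finite simple graph `G`. -/
structure TreeDecomp {V : Type} (G : SimpleGraph V) where
  ι : Type
  finι : Finite ι
  tree : SimpleGraph ι
  isTree : tree.IsTree
  bag : ι → Set V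
  bag_cover : ∀ v : V, ∃ x, v ∈ bag x
  bag_edge : ∀ ⦃u v : V⦄, G.Adj u v → ∃ x, u ∈ bag x ∧ v ∈ bag x
  bag_conn : ∀ v : V, (tree.induce {x | v ∈ bag x}).Connected

/-- A spaghetti tree decomposition: for every vertex `v` of `G`, the nodes whose
bags contain `v` induce a path in the tree. -/
structure SpaghettiTD {V : Type} (G : SimpleGraph V) extends TreeDecomp G where
  bag_path : ∀ v : V, IsPathSet tree {x | v ∈ bag x}

/-- A directed spaghetti tree decomposition: the tree edges are oriented, and for
every vertex `v` of `G` the nodes whose bags contain `v` induce a directed path. -/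
structure DirSpaghettiTD {V : Type} (G : SimpleGraph V) extends TreeDecomp G where
  orient : ι → ι → Prop
  orient_iff : ∀ x y : ι, tree.Adj x y ↔ (orient x y ∨ orient y x)
  orient_asymm : ∀ x y : ι, orient x y → ¬ orient y x
  bag_dirpath : ∀ v : V, IsDirPathSet tree orient {x | v ∈ bag x}

/-- A special tree decomposition: the tree is rooted, and for every vertex `v` of
`G` the nodes whose bags contain `v` induce a vertical path, i.e. a directed path
with respect to the orientation of every tree edge towards the root. -/
structure SpecialTD {V : Type} (G : SimpleGraph V) extends TreeDecomp G where
  root : ι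
  bag_vertical : ∀ v : V,
    IsDirPathSet tree (fun x y => tree.Adj x y ∧ tree.dist y root < tree.dist x root)
      {x | v ∈ bag x}

/-- A path decomposition of a finite simple graph `G`. -/
structure PathDecomp {V : Type} (G : SimpleGraph V) where
  m : ℕ
  hm : 0 < m
  bag : Fin m → Set V
  bag_cover : ∀ v : V, ∃ i, v ∈ bag i
  bag_edge : ∀ ⦃u v : V⦄, G.Adj u v → ∃ i, u ∈ bag i ∧ v ∈ bag i
  bag_convex : ∀ (v : V) (i j k : Fin m), i ≤ j → j ≤ k → v ∈ bag i → v ∈ bag k → v ∈ bag j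

/-- Treewidth: minimal width of a tree decomposition. -/
noncomputable def treewidth {V : Type} (G : SimpleGraph V) : ℕ :=
  sInf {k | ∃ td : TreeDecomp G, ∀ x, (td.bag x).ncard ≤ k + 1}

/-- Spaghetti treewidth: minimal width of a spaghetti tree decomposition. -/
noncomputable def sptw {V : Type} (G : SimpleGraph V) : ℕ :=
  sInf {k | ∃ td : SpaghettiTD G, ∀ x, (td.bag x).ncard ≤ k + 1}

/-- Directed spaghetti treewidth: minimal width of a directed spaghetti tree
decomposition. -/
noncomputable def dptw {V : Type} (G : SimpleGraph V) : ℕ :=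
  sInf {k | ∃ td : DirSpaghettiTD G, ∀ x, (td.bag x).ncard ≤ k + 1}

/-- Special treewidth: minimal width of a special tree decomposition. -/
noncomputable def spctw {V : Type} (G : SimpleGraph V) : ℕ :=
  sInf {k | ∃ td : SpecialTD G, ∀ x, (td.bag x).ncard ≤ k + 1}

/-- Pathwidth: minimal width of a path decomposition. -/
noncomputable def pw {V : Type} (G : SimpleGraph V) : ℕ :=
  sInf {k | ∃ pd : PathDecomp G, ∀ i, (pd.bag i).ncard ≤ k + 1}

/-- A graph is chordal iff it has no induced (i.e. chordless) cycle of length at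
least four. -/
def IsChordal {V : Type} (G : SimpleGraph V) : Prop :=
  ∀ (S : Set V) (n : ℕ), 4 ≤ n → ¬ Nonempty ((G.induce S) ≃g cycGraph n)

/-- A graph is strongly chordal if it is chordal and every even cycle of length at
least six has an odd chord: a chord splitting the cycle into two odd paths of
length at least three. -/
def IsStronglyChordal {V : Type} (G : SimpleGraph V) : Prop :=
  IsChordal G ∧ ∀ n : ℕ, 6 ≤ n → Even n → ∀ f : ZMod n → V,
    Function.Injective f → (∀ i : ZMod n, G.Adj (f i) (f (i + 1))) →
      ∃ (i : ZMod n) (d : ℕ), Odd d ∧ 3 ≤ d ∧ d + 3 ≤ n ∧ G.Adj (f i) (f (i + (d : ZMod n)))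

/-- Strongly chordal treewidth: the minimum of `ω(H) - 1` over all strongly chordal
supergraphs `H` of `G` (on the same vertex set; here `ω(H) ≤ k + 1` is expressed as
`H.CliqueFree (k + 2)`). -/
noncomputable def sctw {V : Type} (G : SimpleGraph V) : ℕ :=
  sInf {k | ∃ H : SimpleGraph V, G ≤ H ∧ IsStronglyChordal H ∧ H.CliqueFree (k + 2)}

/-- `H` is a minor of `G`: there is a family of nonempty, pairwise disjoint,
connected branch sets in `G`, one for each vertex of `H`, such that every edge of
`H` is realized by an edge of `G` between the corresponding branch sets. -/
def IsMinorOf {W V : Type} (H : SimpleGraph W) (G : SimpleGraph V) : Prop :=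
  ∃ f : W → Set V,
    (∀ w, (f w).Nonempty) ∧ (∀ w, (G.induce (f w)).Connected) ∧
    (Pairwise fun w w' => Disjoint (f w) (f w')) ∧
    ∀ ⦃w w'⦄, H.Adj w w' → ∃ u ∈ f w, ∃ v ∈ f w', G.Adj u v

/-- The complete graph on four vertices. -/
def K4 : SimpleGraph (Fin 4) := ⊤

/-- `D₃`: two vertices (`0` and `1`) joined by three internally vertex-disjoint
paths of length three. -/
def D3 : SimpleGraph (Fin 8) := SimpleGraph.fromRel (fun x y =>
  (x = 0 ∧ y = 2) ∨ (x = 2 ∧ y = 3) ∨ (x = 3 ∧ y = 1) ∨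
  (x = 0 ∧ y = 4) ∨ (x = 4 ∧ y = 5) ∨ (x = 5 ∧ y = 1) ∨
  (x = 0 ∧ y = 6) ∨ (x = 6 ∧ y = 7) ∨ (x = 7 ∧ y = 1))

/-- `S₃` (the 3-sun): a 6-cycle `0 1 2 3 4 5` together with the triangle `1 3 5`. -/
def S3 : SimpleGraph (Fin 6) := SimpleGraph.fromRel (fun x y =>
  (x = 0 ∧ y = 1) ∨ (x = 1 ∧ y = 2) ∨ (x = 2 ∧ y = 3) ∨ (x = 3 ∧ y = 4) ∨
  (x = 4 ∧ y = 5) ∨ (x = 5 ∧ y = 0) ∨ (x = 1 ∧ y = 3) ∨ (x = 3 ∧ y = 5) ∨ (x = 5 ∧ y = 1))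

/-- A graph is 2-connected if it has at least three vertices and deleting any one
vertex leaves it connected. -/
def TwoConnected {V : Type} (G : SimpleGraph V) : Prop :=
  3 ≤ Nat.card V ∧ ∀ v : V, (G.induce {x | x ≠ v}).Connected

/-- The cell completion of `G`: add an edge `vw` for every pair of (nonadjacent)
vertices `v, w` such that deleting `v` and `w` leaves at least three connected
components. -/
def cellCompletion {V : Type} (G : SimpleGraph V) : SimpleGraph V :=
  SimpleGraph.fromRel (fun v w => G.Adj v w ∨
    3 ≤ Nat.card ((G.induce {x | x ≠ v ∧ x ≠ w}).ConnectedComponent))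

/-- The induced subgraph of `G` on `S` has no cut vertex. -/
def NoCutVertex {V : Type} (G : SimpleGraph V) (S : Set V) : Prop :=
  ∀ v ∈ S, (S \ {v}).Nonempty → (G.induce (S \ {v})).Connected

/-- `S` carries a block of `G`: a maximal connected (induced) subgraph without a
cut vertex. -/
def IsBlock {V : Type} (G : SimpleGraph V) (S : Set V) : Prop :=
  S.Nonempty ∧ (G.induce S).Connected ∧ NoCutVertex G S ∧
    ∀ S' : Set V, S ⊆ S' → (G.induce S').Connected → NoCutVertex G S' → S' = S

/-- Glue a cycle of length `n` onto the graph `G` by identifying the cycle edge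
`{0, 1}` (with its end vertices) with the edge `{a, b}` of `G`. -/
def glueCycle {V : Type} (G : SimpleGraph V) (n : ℕ) (a b : V) :
    SimpleGraph (V ⊕ {x : ZMod n // x ≠ 0 ∧ x ≠ 1}) :=
  SimpleGraph.fromRel (fun p q =>
    match p, q with
    | Sum.inl u, Sum.inl v => G.Adj u v
    | Sum.inl u, Sum.inr x => (u = a ∧ (cycGraph n).Adj 0 x.1) ∨ (u = b ∧ (cycGraph n).Adj 1 x.1)
    | Sum.inr x, Sum.inr y => (cycGraph n).Adj x.1 y.1
    | Sum.inr _, Sum.inl _ => False)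

/-- The class of trees of cycles: every cycle is a tree of cycles, and gluing a
cycle onto a tree of cycles along an edge yields a tree of cycles (up to
isomorphism). -/
inductive IsTreeOfCycles : {V : Type} → SimpleGraph V → Prop
  | cycle {V : Type} (G : SimpleGraph V) (n : ℕ) (hn : 3 ≤ n)
      (e : Nonempty (G ≃g cycGraph n)) : IsTreeOfCycles G
  | glue {V W : Type} (G : SimpleGraph V) (hG : IsTreeOfCycles G)
      (n : ℕ) (hn : 3 ≤ n) (a b : V) (hab : G.Adj a b)
      (H : SimpleGraph W) (e : Nonempty (H ≃g glueCycle G n a b)) : IsTreeOfCycles H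

/-- `S` is the vertex set of a chordless cycle of `G`, i.e. it induces a cycle. -/
def IsChordlessCycle {V : Type} (G : SimpleGraph V) (S : Set V) : Prop :=
  ∃ n : ℕ, 3 ≤ n ∧ Nonempty ((G.induce S) ≃g cycGraph n)

/-- The edge `uv` is an edge separator: it lies in at least two distinct chordless
cycles of `G`. -/
def IsEdgeSeparator {V : Type} (G : SimpleGraph V) (u v : V) : Prop :=
  G.Adj u v ∧ ∃ S₁ S₂ : Set V, S₁ ≠ S₂ ∧ IsChordlessCycle G S₁ ∧ IsChordlessCycle G S₂ ∧
    u ∈ S₁ ∧ v ∈ S₁ ∧ u ∈ S₂ ∧ v ∈ S₂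

/-- `S` is a simplicial triangle of `G`: a chordless cycle on three vertices
containing a simplicial vertex of `G`. -/
def IsSimplicialTriangle {V : Type} (G : SimpleGraph V) (S : Set V) : Prop :=
  IsChordlessCycle G S ∧ S.ncard = 3 ∧ ∃ v ∈ S, G.IsClique (G.neighborSet v)

/-- A chain tree of cycles: a tree of cycles in which every edge lies in at most two
chordless cycles that are not simplicial triangles (equivalently, if an edge lies in
`m ≥ 3` chordless cycles then at least `m - 2` of them are simplicial triangles). -/
def IsChainTreeOfCycles {V : Type} (G : SimpleGraph V) : Prop :=
  IsTreeOfCycles G ∧ ∀ u v : V, G.Adj u v →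
    {S : Set V | IsChordlessCycle G S ∧ u ∈ S ∧ v ∈ S ∧ ¬ IsSimplicialTriangle G S}.ncard ≤ 2

/-- A tree of two-boundaried cycles: a tree of cycles in which every chordless
cycle contains at most two edge separators. -/
def IsTreeOfTwoBoundariedCycles {V : Type} (G : SimpleGraph V) : Prop :=
  IsTreeOfCycles G ∧ ∀ S : Set V, IsChordlessCycle G S →
    {e : Sym2 V | ∃ u v : V, e = s(u, v) ∧ u ∈ S ∧ v ∈ S ∧ IsEdgeSeparator G u v}.ncard ≤ 2

/-- A path of cycles: a tree of cycles in which every chordless cycle contains at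
most two edge separators and every edge lies in at most two chordless cycles that
are not simplicial triangles. -/
def IsPathOfCycles {V : Type} (G : SimpleGraph V) : Prop :=
  IsTreeOfCycles G ∧
    (∀ S : Set V, IsChordlessCycle G S →
      {e : Sym2 V | ∃ u v : V, e = s(u, v) ∧ u ∈ S ∧ v ∈ S ∧ IsEdgeSeparator G u v}.ncard ≤ 2) ∧
    ∀ u v : V, G.Adj u v →
      {S : Set V | IsChordlessCycle G S ∧ u ∈ S ∧ v ∈ S ∧ ¬ IsSimplicialTriangle G S}.ncard ≤ 2

/-- The graph is a single edge. -/
def IsSingleEdgeGraph {V : Type} (G : SimpleGraph V) : Prop :=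
  Nat.card V = 2 ∧ ∀ a b : V, a ≠ b → G.Adj a b

/-- A mamba: a 2-connected graph of pathwidth two, a single edge, or an isolated
vertex. -/
def IsMamba {V : Type} (G : SimpleGraph V) : Prop :=
  (TwoConnected G ∧ pw G = 2) ∨ IsSingleEdgeGraph G ∨ Nat.card V = 1

/-- `v` is a head vertex of the mamba `G`: some path decomposition of `G` of width
at most two has `v` in its first bag. -/
def IsHeadVertex {V : Type} (G : SimpleGraph V) (v : V) : Prop :=
  ∃ pd : PathDecomp G, (∀ i, (pd.bag i).ncard ≤ 3) ∧ v ∈ pd.bag ⟨0, pd.hm⟩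

/-- Glue the graph `M` onto the graph `G` by identifying the vertex `h` of `M` with
the vertex `x` of `G`. -/
def glueAtVertex {V W : Type} (G : SimpleGraph V) (x : V) (M : SimpleGraph W) (h : W) :
    SimpleGraph (V ⊕ {w : W // w ≠ h}) :=
  SimpleGraph.fromRel (fun p q =>
    match p, q with
    | Sum.inl u, Sum.inl u' => G.Adj u u'
    | Sum.inl u, Sum.inr w => u = x ∧ M.Adj h w.1
    | Sum.inr w, Sum.inr w' => M.Adj w.1 w'.1
    | Sum.inr _, Sum.inl _ => False)

/-- The class of mamba trees: every mamba is a mamba tree, and gluing a mamba onto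
a mamba tree by identifying a vertex of the mamba tree with a head vertex of the
mamba yields a mamba tree (up to isomorphism). -/
inductive IsMambaTree : {V : Type} → SimpleGraph V → Prop
  | mamba {V : Type} (G : SimpleGraph V) (hG : IsMamba G) : IsMambaTree G
  | glue {V W U : Type} (G : SimpleGraph V) (hG : IsMambaTree G)
      (M : SimpleGraph W) (hM : IsMamba M) (x : V) (h : W) (hh : IsHeadVertex M h)
      (K : SimpleGraph U) (e : Nonempty (K ≃g glueAtVertex G x M h)) : IsMambaTree K

/-- Subdivide the edge `{a, b}` of `G` by a new vertex. -/
def subdivideEdge {V : Type} (G : SimpleGraph V) (a b : V) : SimpleGraph (V ⊕ Unit) :=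
  SimpleGraph.fromRel (fun p q =>
    match p, q with
    | Sum.inl u, Sum.inl v => G.Adj u v ∧ ¬(u = a ∧ v = b) ∧ ¬(u = b ∧ v = a)
    | Sum.inl u, Sum.inr _ => u = a ∨ u = b
    | Sum.inr _, _ => False)

/-- `H` is a subdivision of `G`: `H` is obtained from (an isomorphic copy of) `G`
by repeatedly subdividing edges. -/
inductive IsSubdivisionOf : {W V : Type} → SimpleGraph W → SimpleGraph V → Prop
  | base {V W : Type} {G : SimpleGraph V} {H : SimpleGraph W}
      (e : Nonempty (H ≃g G)) : IsSubdivisionOf H G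
  | step {V W U : Type} {G : SimpleGraph V} {H : SimpleGraph W} (a b : W) (hab : H.Adj a b)
      (h : IsSubdivisionOf H G) {K : SimpleGraph U}
      (e : Nonempty (K ≃g subdivideEdge H a b)) : IsSubdivisionOf K G

/-- Contract the edge `{a, b}` of `G` (the contracted vertex is `a`, `b` is removed). -/
def contractEdge {V : Type} (G : SimpleGraph V) (a b : V) : SimpleGraph {x : V // x ≠ b} :=
  SimpleGraph.fromRel (fun x y =>
    G.Adj x.1 y.1 ∨ (x.1 = a ∧ G.Adj b y.1) ∨ (y.1 = a ∧ G.Adj b x.1))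

open SimpleGraph Set

variable {V W : Type}

/-- Hom between induced subgraphs from set inclusion. -/
def induceHomMono (G : SimpleGraph V) {s t : Set V} (h : s ⊆ t) :
    G.induce s →g G.induce t :=
  ⟨Set.inclusion h, fun {a b} hab => hab⟩

lemma reachable_induce_mono (G : SimpleGraph V) {s t : Set V} (h : s ⊆ t)
    {a b : ↥s} (hr : (G.induce s).Reachable a b) :
    (G.induce t).Reachable (Set.inclusion h a) (Set.inclusion h b) :=
  hr.map (induceHomMono G h)

/-- Induced subgraphs of acyclic graphs are acyclic. -/
lemma IsAcyclic.induce {G : SimpleGraph V} (hG : G.IsAcyclic) (s : Set V) :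
    (G.induce s).IsAcyclic := by
  intro v c hc
  exact hG ((c.map (SimpleGraph.Embedding.induce (G := G) s).toHom))
    (hc.map (SimpleGraph.Embedding.induce (G := G) s).injective)

/-- A finite tree has a vertex of degree at most one. -/
lemma exists_degree_le_one {ι : Type} [Fintype ι] (T : SimpleGraph ι) [DecidableRel T.Adj]
    (hT : T.IsTree) : ∃ x : ι, T.degree x ≤ 1 := by
  by_contra h
  push_neg at h
  have hsum := T.sum_degrees_eq_twice_card_edges
  have hcard := hT.card_edgeFinset
  have hge : 2 * Fintype.card ι ≤ ∑ v : ι, T.degree v := by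
    calc 2 * Fintype.card ι = ∑ _v : ι, 2 := by simp [Finset.sum_const, mul_comm]
    _ ≤ ∑ v : ι, T.degree v := Finset.sum_le_sum (fun i _ => h i)
  rw [hsum] at hge
  omega

/-- In a forest, a finite connected set of vertices contains a vertex with at
most one neighbour inside the set. -/
lemma exists_path_endpoint {ι : Type} [Finite ι] (T : SimpleGraph ι) (hT : T.IsAcyclic)
    {s : Set ι} (hc : (T.induce s).Connected) :
    ∃ x ∈ s, {y | y ∈ s ∧ T.Adj x y}.ncard ≤ 1 := by
  classical
  have : Fintype ι := Fintype.ofFinite ι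
  have : Fintype ↥s := Fintype.ofFinite _
  have htree : (T.induce s).IsTree := ⟨hc, IsAcyclic.induce hT s⟩
  obtain ⟨x, hx⟩ := exists_degree_le_one (T.induce s) htree
  refine ⟨x.1, x.2, ?_⟩
  have himg : {y | y ∈ s ∧ T.Adj x.1 y} = Subtype.val '' ((T.induce s).neighborSet x) := by
    ext y; constructor
    · rintro ⟨hy, hadj⟩; exact ⟨⟨y, hy⟩, hadj, rfl⟩
    · rintro ⟨⟨y', hy'⟩, hadj, rfl⟩; exact ⟨hy', hadj⟩
  rw [himg, Set.ncard_image_of_injective _ Subtype.val_injective]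
  have hdeg : ((T.induce s).neighborSet x).ncard = (T.induce s).degree x := by
    rw [← SimpleGraph.card_neighborSet_eq_degree, Set.ncard_eq_toFinset_card']
    exact Set.toFinset_card _
  omega

/-- Restriction of a spaghetti tree decomposition to an induced subgraph. -/
def SpaghettiTD.restrict {G : SimpleGraph V} (td : SpaghettiTD G) (S : Set V) :
    SpaghettiTD (G.induce S) where
  ι := td.ι
  finι := td.finι
  tree := td.tree
  isTree := td.isTree
  bag := fun x => {v : S | v.1 ∈ td.bag x}
  bag_cover := fun v => td.bag_cover v.1
  bag_edge := fun u v h => td.bag_edge h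
  bag_conn := fun v => td.bag_conn v.1
  bag_path := fun v => td.bag_path v.1

/-- Pullback of a spaghetti tree decomposition along a graph isomorphism. -/
def SpaghettiTD.ofIso {G : SimpleGraph V} {H : SimpleGraph W} (e : G ≃g H)
    (td : SpaghettiTD H) : SpaghettiTD G where
  ι := td.ι
  finι := td.finι
  tree := td.tree
  isTree := td.isTree
  bag := fun x => {v : V | e v ∈ td.bag x}
  bag_cover := fun v => td.bag_cover (e v)
  bag_edge := fun u v h => td.bag_edge (e.map_adj_iff.mpr h)
  bag_conn := fun v => td.bag_conn (e v)
  bag_path := fun v => td.bag_path (e v)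

lemma connected_of_subsingleton {α : Type} (H : SimpleGraph α) [Subsingleton α]
    (h : Nonempty α) : H.Connected := by
  have : Nonempty α := h
  constructor
  intro a b
  rw [Subsingleton.elim a b]

lemma SpaghettiTD.ofIso_ncard {G : SimpleGraph V} {H : SimpleGraph W} (e : G ≃g H)
    (td : SpaghettiTD H) (x : td.ι) :
    ((td.ofIso e).bag x).ncard = (td.bag x).ncard := by
  show ((⇑e) ⁻¹' (td.bag x)).ncard = _
  have h0 : (⇑e) ⁻¹' (td.bag x) = (⇑e.toEquiv) ⁻¹' (td.bag x) := rfl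
  rw [h0, ← Equiv.image_symm_eq_preimage e.toEquiv,
    Set.ncard_image_of_injective _ e.toEquiv.symm.injective]

lemma SpaghettiTD.restrict_ncard [Finite V] {G : SimpleGraph V} (td : SpaghettiTD G)
    (S : Set V) (x : td.ι) : ((td.restrict S).bag x).ncard ≤ (td.bag x).ncard := by
  have : (td.restrict S).bag x = {v : S | v.1 ∈ td.bag x} := rfl
  rw [this]
  have h2 : Subtype.val '' {v : S | v.1 ∈ td.bag x} ⊆ td.bag x := by
    rintro y ⟨⟨y', hy'⟩, hmem, rfl⟩; exact hmem
  calc ({v : S | v.1 ∈ td.bag x}).ncard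
      = (Subtype.val '' {v : S | v.1 ∈ td.bag x}).ncard :=
        (Set.ncard_image_of_injective _ Subtype.val_injective).symm
    _ ≤ (td.bag x).ncard := Set.ncard_le_ncard h2 (Set.toFinite _)

/-- The trivial one-node spaghetti tree decomposition. -/
def trivialSTD (G : SimpleGraph V) : SpaghettiTD G where
  ι := Unit
  finι := inferInstance
  tree := ⊥
  isTree := ⟨connected_of_subsingleton _ ⟨()⟩, isAcyclic_bot⟩
  bag := fun _ => Set.univ
  bag_cover := fun v => ⟨(), trivial⟩
  bag_edge := fun u v _ => ⟨(), trivial, trivial⟩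
  bag_conn := fun v => by
    have hsub : Subsingleton {x : Unit | v ∈ (Set.univ : Set V)} :=
      ⟨fun a b => Subtype.ext (Subsingleton.elim _ _)⟩
    exact connected_of_subsingleton _ ⟨⟨(), trivial⟩⟩
  bag_path := fun v => by
    refine ⟨?_, fun x _ => ?_⟩
    · have hsub : Subsingleton {x : Unit | v ∈ (Set.univ : Set V)} :=
        ⟨fun a b => Subtype.ext (Subsingleton.elim _ _)⟩
      exact connected_of_subsingleton _ ⟨⟨(), trivial⟩⟩
    · have : {y | y ∈ {x | v ∈ Set.univ} ∧ (⊥ : SimpleGraph Unit).Adj x y} = ∅ := by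
        ext y; simp
      rw [this]; simp

lemma sptw_le_iff [Finite V] (G : SimpleGraph V) (k : ℕ) :
    sptw G ≤ k ↔ ∃ td : SpaghettiTD G, ∀ x, (td.bag x).ncard ≤ k + 1 := by
  have hfV := Fintype.ofFinite V
  constructor
  · intro h
    have hne : {k | ∃ td : SpaghettiTD G, ∀ x, (td.bag x).ncard ≤ k + 1}.Nonempty := by
      refine ⟨Fintype.card V, trivialSTD G, fun x => ?_⟩
      show (Set.univ : Set V).ncard ≤ _
      rw [Set.ncard_univ, Nat.card_eq_fintype_card]
      omega
    obtain ⟨td, htd⟩ := Nat.sInf_mem hne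
    exact ⟨td, fun x => le_trans (htd x) (by unfold sptw at h; omega)⟩
  · rintro ⟨td, htd⟩
    exact Nat.sInf_le ⟨td, htd⟩

/-! ## Joining two trees by an edge -/

/-- Join two graphs at distinguished nodes by an edge. -/
def joinTree {ι κ : Type} (TA : SimpleGraph ι) (TB : SimpleGraph κ) (xA : ι) (xB : κ) :
    SimpleGraph (ι ⊕ κ) where
  Adj p q := match p, q with
    | .inl x, .inl y => TA.Adj x y
    | .inr x, .inr y => TB.Adj x y
    | .inl x, .inr y => x = xA ∧ y = xB
    | .inr y, .inl x => x = xA ∧ y = xB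
  symm := ⟨by rintro (x|x) (y|y) h <;> first | exact h.symm | exact h⟩
  loopless := ⟨by rintro (x|x) h <;> exact (SimpleGraph.irrefl _) h⟩

section JoinTree

variable {ι κ : Type} {TA : SimpleGraph ι} {TB : SimpleGraph κ} {xA : ι} {xB : κ}

lemma joinTree_adj_inl {x y : ι} :
    (joinTree TA TB xA xB).Adj (Sum.inl x) (Sum.inl y) ↔ TA.Adj x y := Iff.rfl

lemma joinTree_adj_inr {x y : κ} :
    (joinTree TA TB xA xB).Adj (Sum.inr x) (Sum.inr y) ↔ TB.Adj x y := Iff.rfl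

lemma joinTree_adj_cross {x : ι} {y : κ} :
    (joinTree TA TB xA xB).Adj (Sum.inl x) (Sum.inr y) ↔ x = xA ∧ y = xB := Iff.rfl

lemma joinTree_adj_cross' {x : ι} {y : κ} :
    (joinTree TA TB xA xB).Adj (Sum.inr y) (Sum.inl x) ↔ x = xA ∧ y = xB := Iff.rfl

def joinTree_homInl : TA →g joinTree TA TB xA xB :=
  ⟨Sum.inl, fun {a b} h => h⟩

def joinTree_homInr : TB →g joinTree TA TB xA xB :=
  ⟨Sum.inr, fun {a b} h => h⟩

/-- Projecting a walk along a map that sends edges to edges or collapses them. -/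
lemma walk_proj {α β : Type} {J : SimpleGraph α} {T : SimpleGraph β} (f : α → β)
    (hf : ∀ ⦃a b⦄, J.Adj a b → T.Adj (f a) (f b) ∨ f a = f b)
    {a b : α} (p : J.Walk a b) :
    ∃ q : T.Walk (f a) (f b),
      ∀ e ∈ q.edges, ∃ e₀ ∈ p.edges, e = Sym2.map f e₀ := by
  induction p with
  | nil => exact ⟨SimpleGraph.Walk.nil, by simp⟩
  | @cons u v w h p ih =>
    obtain ⟨q, hq⟩ := ih
    rcases hf h with hadj | heq
    · refine ⟨SimpleGraph.Walk.cons hadj q, ?_⟩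
      intro e he
      rw [SimpleGraph.Walk.edges_cons] at he
      rcases List.mem_cons.mp he with he | he
      · exact ⟨s(u, v), by simp, by simp [he]⟩
      · obtain ⟨e₀, he₀, rfl⟩ := hq e he
        exact ⟨e₀, by simp [he₀], rfl⟩
    · refine ⟨q.copy heq.symm rfl, ?_⟩
      intro e he
      rw [SimpleGraph.Walk.edges_copy] at he
      obtain ⟨e₀, he₀, rfl⟩ := hq e he
      exact ⟨e₀, by simp [he₀], rfl⟩

/-- If a graph on a sum type has no cross edges, walks stay on the left side. -/
lemma walk_stay_inl {α β : Type} {K : SimpleGraph (α ⊕ β)}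
    (hno : ∀ u y, ¬K.Adj (Sum.inl u) (Sum.inr y)) :
    ∀ {a c : α ⊕ β} (_ : K.Walk a c), (∃ w, a = Sum.inl w) → ∃ w, c = Sum.inl w := by
  intro a c p
  induction p with
  | nil => exact id
  | @cons u v w h p ih =>
    rintro ⟨z, rfl⟩
    rcases v with x | y
    · exact ih ⟨x, rfl⟩
    · exact absurd h (hno z y)

lemma walk_stay_inr {α β : Type} {K : SimpleGraph (α ⊕ β)}
    (hno : ∀ u y, ¬K.Adj (Sum.inl u) (Sum.inr y)) :
    ∀ {a c : α ⊕ β} (_ : K.Walk a c), (∃ w, a = Sum.inr w) → ∃ w, c = Sum.inr w := by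
  intro a c p
  induction p with
  | nil => exact id
  | @cons u v w h p ih =>
    rintro ⟨z, rfl⟩
    rcases v with x | y
    · exact absurd h.symm (hno x z)
    · exact ih ⟨y, rfl⟩

lemma sdiff_fromEdgeSet_adj {α : Type} (Gr : SimpleGraph α) (e : Sym2 α) {a b : α} :
    (Gr \ SimpleGraph.fromEdgeSet {e}).Adj a b ↔ Gr.Adj a b ∧ s(a, b) ≠ e := by
  rw [SimpleGraph.sdiff_adj, SimpleGraph.fromEdgeSet_adj]
  constructor
  · rintro ⟨h1, h2⟩
    exact ⟨h1, fun he => h2 ⟨by simp [he], h1.ne⟩⟩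
  · rintro ⟨h1, h2⟩
    exact ⟨h1, fun hp => h2 (by simpa using hp.1)⟩

lemma joinTree_isTree (hA : TA.IsTree) (hB : TB.IsTree) :
    (joinTree TA TB xA xB).IsTree := by
  set J := joinTree TA TB xA xB with hJ
  have : Nonempty (ι ⊕ κ) := ⟨Sum.inl xA⟩
  constructor
  · -- connected
    have hra : ∀ x : ι, J.Reachable (Sum.inl x) (Sum.inl xA) := fun x =>
      (hA.isConnected.preconnected x xA).map (joinTree_homInl)
    have hrb : ∀ y : κ, J.Reachable (Sum.inr y) (Sum.inl xA) := fun y =>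
      ((hB.isConnected.preconnected y xB).map (joinTree_homInr)).trans
        (SimpleGraph.Adj.reachable (by exact ⟨rfl, rfl⟩))
    constructor
    rintro (x | y) (x' | y')
    · exact (hra x).trans (hra x').symm
    · exact (hra x).trans (hrb y').symm
    · exact (hrb y).trans (hra x').symm
    · exact (hrb y).trans (hrb y').symm
  · -- acyclic
    rw [SimpleGraph.isAcyclic_iff_forall_adj_isBridge]
    have hbrA := SimpleGraph.isAcyclic_iff_forall_adj_isBridge.mp hA.IsAcyclic
    have hbrB := SimpleGraph.isAcyclic_iff_forall_adj_isBridge.mp hB.IsAcyclic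
    rintro (x | y) (x' | y') hadj
    · -- edge inside TA
      rw [SimpleGraph.isBridge_iff]
      refine fun hreach => ?_
      obtain ⟨p⟩ := hreach
      have hTAadj : TA.Adj x x' := hadj
      have hbr := SimpleGraph.isBridge_iff.mp (hbrA hTAadj)
      refine hbr ?_
      have hf : ∀ ⦃a b : ι ⊕ κ⦄,
          (J \ SimpleGraph.fromEdgeSet {s(Sum.inl x, Sum.inl x')}).Adj a b →
          (TA \ SimpleGraph.fromEdgeSet {s(x, x')}).Adj
            (Sum.elim id (fun _ => xA) a) (Sum.elim id (fun _ => xA) b) ∨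
          Sum.elim id (fun _ => xA) a = Sum.elim id (fun _ => xA) b := by
        rintro (u | u) (w | w) hab <;>
          rw [sdiff_fromEdgeSet_adj] at hab
        · refine Or.inl ?_
          rw [sdiff_fromEdgeSet_adj]
          refine ⟨hab.1, fun he => hab.2 ?_⟩
          have he' : s(u, w) = s(x, x') := by simpa using he
          simpa [Sym2.map_pair_eq] using congrArg (Sym2.map (Sum.inl : ι → ι ⊕ κ)) he'
        · exact Or.inr (by simp [(joinTree_adj_cross.mp hab.1).1])
        · exact Or.inr (by simp [(joinTree_adj_cross'.mp hab.1).1])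
        · exact Or.inr rfl
      obtain ⟨q, _⟩ := walk_proj _ hf p
      exact ⟨q⟩
    · -- cross edge inl-inr
      have h12 : x = xA ∧ y' = xB := hadj
      obtain ⟨h1, h2⟩ := id h12
      rw [SimpleGraph.isBridge_iff]
      refine fun hreach => ?_
      obtain ⟨p⟩ := hreach
      have hno : ∀ u z, ¬(J \ SimpleGraph.fromEdgeSet {s(Sum.inl x, Sum.inr y')}).Adj
          (Sum.inl u) (Sum.inr z) := by
        intro u z hab
        rw [sdiff_fromEdgeSet_adj] at hab
        obtain ⟨h3, h4⟩ : u = xA ∧ z = xB := hab.1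
        exact hab.2 (by rw [h1, h2, ← h3, ← h4])
      obtain ⟨w, hw⟩ := walk_stay_inl hno p ⟨x, rfl⟩
      exact nomatch hw
    · -- cross edge inr-inl
      have h12 : x' = xA ∧ y = xB := hadj
      obtain ⟨h1, h2⟩ := id h12
      rw [SimpleGraph.isBridge_iff]
      refine fun hreach => ?_
      obtain ⟨p⟩ := hreach
      have hno : ∀ u z, ¬(J \ SimpleGraph.fromEdgeSet {s(Sum.inr y, Sum.inl x')}).Adj
          (Sum.inl u) (Sum.inr z) := by
        intro u z hab
        rw [sdiff_fromEdgeSet_adj] at hab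
        obtain ⟨h3, h4⟩ : u = xA ∧ z = xB := hab.1
        refine hab.2 ?_
        rw [h3, h4, ← h1, ← h2]
        exact Sym2.eq_swap
      obtain ⟨w, hw⟩ := walk_stay_inr hno p ⟨y, rfl⟩
      exact nomatch hw
    · -- edge inside TB
      rw [SimpleGraph.isBridge_iff]
      refine fun hreach => ?_
      obtain ⟨p⟩ := hreach
      have hTBadj : TB.Adj y y' := hadj
      have hbr := SimpleGraph.isBridge_iff.mp (hbrB hTBadj)
      refine hbr ?_
      have hf : ∀ ⦃a b : ι ⊕ κ⦄,
          (J \ SimpleGraph.fromEdgeSet {s(Sum.inr y, Sum.inr y')}).Adj a b →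
          (TB \ SimpleGraph.fromEdgeSet {s(y, y')}).Adj
            (Sum.elim (fun _ => xB) id a) (Sum.elim (fun _ => xB) id b) ∨
          Sum.elim (fun _ => xB) id a = Sum.elim (fun _ => xB) id b := by
        rintro (u | u) (w | w) hab <;>
          rw [sdiff_fromEdgeSet_adj] at hab
        · exact Or.inr rfl
        · exact Or.inr (by simp [(joinTree_adj_cross.mp hab.1).2])
        · exact Or.inr (by simp [(joinTree_adj_cross'.mp hab.1).2])
        · refine Or.inl ?_
          rw [sdiff_fromEdgeSet_adj]
          refine ⟨hab.1, fun he => hab.2 ?_⟩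
          have he' : s(u, w) = s(y, y') := by simpa using he
          simpa [Sym2.map_pair_eq] using congrArg (Sym2.map (Sum.inr : κ → ι ⊕ κ)) he'
      obtain ⟨q, _⟩ := walk_proj _ hf p
      exact ⟨q⟩

noncomputable def joinInduceInlIso (s : Set ι) :
    TA.induce s ≃g (joinTree TA TB xA xB).induce (Sum.inl '' s) where
  toEquiv := Equiv.Set.image Sum.inl s Sum.inl_injective
  map_rel_iff' := Iff.rfl

noncomputable def joinInduceInrIso (t : Set κ) :
    TB.induce t ≃g (joinTree TA TB xA xB).induce (Sum.inr '' t) where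
  toEquiv := Equiv.Set.image Sum.inr t Sum.inr_injective
  map_rel_iff' := Iff.rfl

lemma isPathSet_join_inl {s : Set ι} (h : IsPathSet TA s) :
    IsPathSet (joinTree TA TB xA xB) (Sum.inl '' s) := by
  constructor
  · exact (joinInduceInlIso (TB := TB) (xA := xA) (xB := xB) s).connected_iff.mp h.1
  · rintro p ⟨x, hx, rfl⟩
    have hset : {q | q ∈ Sum.inl '' s ∧ (joinTree TA TB xA xB).Adj (Sum.inl x) q}
        = Sum.inl '' {y | y ∈ s ∧ TA.Adj x y} := by
      ext q; constructor
      · rintro ⟨⟨y, hy, rfl⟩, hadj⟩; exact ⟨y, ⟨hy, hadj⟩, rfl⟩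
      · rintro ⟨y, ⟨hy, hadj⟩, rfl⟩; exact ⟨⟨y, hy, rfl⟩, hadj⟩
    rw [hset, Set.ncard_image_of_injective _ Sum.inl_injective]
    exact h.2 x hx

lemma isPathSet_join_inr {t : Set κ} (h : IsPathSet TB t) :
    IsPathSet (joinTree TA TB xA xB) (Sum.inr '' t) := by
  constructor
  · exact (joinInduceInrIso (TA := TA) (xA := xA) (xB := xB) t).connected_iff.mp h.1
  · rintro p ⟨y, hy, rfl⟩
    have hset : {q | q ∈ Sum.inr '' t ∧ (joinTree TA TB xA xB).Adj (Sum.inr y) q}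
        = Sum.inr '' {z | z ∈ t ∧ TB.Adj y z} := by
      ext q; constructor
      · rintro ⟨⟨z, hz, rfl⟩, hadj⟩; exact ⟨z, ⟨hz, hadj⟩, rfl⟩
      · rintro ⟨z, ⟨hz, hadj⟩, rfl⟩; exact ⟨⟨z, hz, rfl⟩, hadj⟩
    rw [hset, Set.ncard_image_of_injective _ Sum.inr_injective]
    exact h.2 y hy

lemma isPathSet_join_union [Finite ι] [Finite κ] {s : Set ι} {t : Set κ}
    (hs : IsPathSet TA s) (ht : IsPathSet TB t)
    (hxAs : xA ∈ s) (hxBt : xB ∈ t)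
    (hdA : {y | y ∈ s ∧ TA.Adj xA y}.ncard ≤ 1)
    (hdB : {z | z ∈ t ∧ TB.Adj xB z}.ncard ≤ 1) :
    IsPathSet (joinTree TA TB xA xB) (Sum.inl '' s ∪ Sum.inr '' t) := by
  set J := joinTree TA TB xA xB with hJdef
  set N : Set (ι ⊕ κ) := Sum.inl '' s ∪ Sum.inr '' t with hNdef
  have hsubA : Sum.inl '' s ⊆ N := Set.subset_union_left
  have hsubB : Sum.inr '' t ⊆ N := Set.subset_union_right
  have hconnA : (J.induce (Sum.inl '' s)).Connected :=
    (joinInduceInlIso (TB := TB) (xA := xA) (xB := xB) s).connected_iff.mp hs.1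
  have hconnB : (J.induce (Sum.inr '' t)).Connected :=
    (joinInduceInrIso (TA := TA) (xA := xA) (xB := xB) t).connected_iff.mp ht.1
  have hmemA : (Sum.inl xA : ι ⊕ κ) ∈ N := hsubA ⟨xA, hxAs, rfl⟩
  have hmemB : (Sum.inr xB : ι ⊕ κ) ∈ N := hsubB ⟨xB, hxBt, rfl⟩
  constructor
  · -- connectivity
    have hre : ∀ p : ↥N, (J.induce N).Reachable p ⟨Sum.inl xA, hmemA⟩ := by
      rintro ⟨p, hp⟩
      rcases hp with ⟨x, hx, rfl⟩ | ⟨y, hy, rfl⟩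
      · have h1 : (J.induce (Sum.inl '' s)).Reachable
            ⟨Sum.inl x, ⟨x, hx, rfl⟩⟩ ⟨Sum.inl xA, ⟨xA, hxAs, rfl⟩⟩ :=
          hconnA.preconnected _ _
        exact reachable_induce_mono J hsubA h1
      · have h1 : (J.induce (Sum.inr '' t)).Reachable
            ⟨Sum.inr y, ⟨y, hy, rfl⟩⟩ ⟨Sum.inr xB, ⟨xB, hxBt, rfl⟩⟩ :=
          hconnB.preconnected _ _
        have h2 := reachable_induce_mono J hsubB h1
        refine (h2.trans (SimpleGraph.Adj.reachable ?_))
        show J.Adj (Sum.inr xB) (Sum.inl xA)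
        exact ⟨rfl, rfl⟩
    have : Nonempty ↥N := ⟨⟨Sum.inl xA, hmemA⟩⟩
    constructor
    intro a b
    exact (hre a).trans (hre b).symm
  · -- degrees
    rintro p (⟨x, hx, rfl⟩ | ⟨y, hy, rfl⟩)
    · by_cases hx0 : x = xA
      · subst hx0
        have hsub : {q | q ∈ N ∧ J.Adj (Sum.inl x) q}
            ⊆ Sum.inl '' {y | y ∈ s ∧ TA.Adj x y} ∪ {Sum.inr xB} := by
          rintro q ⟨hqN, hadj⟩
          rcases q with z | z
          · refine Or.inl ⟨z, ⟨?_, hadj⟩, rfl⟩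
            rcases hqN with ⟨z', hz', hz'eq⟩ | ⟨z', _, hz'eq⟩
            · rwa [← Sum.inl_injective hz'eq]
            · exact absurd hz'eq (by simp)
          · rcases (joinTree_adj_cross.mp hadj) with ⟨_, rfl⟩
            exact Or.inr rfl
        calc {q | q ∈ N ∧ J.Adj (Sum.inl x) q}.ncard
            ≤ (Sum.inl '' {y | y ∈ s ∧ TA.Adj x y} ∪ {Sum.inr xB} : Set (ι ⊕ κ)).ncard :=
              Set.ncard_le_ncard hsub (Set.toFinite _)
          _ ≤ (Sum.inl '' {y | y ∈ s ∧ TA.Adj x y}).ncard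
              + ({Sum.inr xB} : Set (ι ⊕ κ)).ncard := Set.ncard_union_le _ _
          _ ≤ 1 + 1 := by
              rw [Set.ncard_image_of_injective _ Sum.inl_injective, Set.ncard_singleton]
              exact add_le_add_left hdA 1
          _ ≤ 2 := le_refl 2
      · have hsub : {q | q ∈ N ∧ J.Adj (Sum.inl x) q}
            ⊆ Sum.inl '' {y | y ∈ s ∧ TA.Adj x y} := by
          rintro q ⟨hqN, hadj⟩
          rcases q with z | z
          · refine ⟨z, ⟨?_, hadj⟩, rfl⟩
            rcases hqN with ⟨z', hz', hz'eq⟩ | ⟨z', _, hz'eq⟩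
            · rwa [← Sum.inl_injective hz'eq]
            · exact absurd hz'eq (by simp)
          · exact absurd (joinTree_adj_cross.mp hadj).1 hx0
        calc {q | q ∈ N ∧ J.Adj (Sum.inl x) q}.ncard
            ≤ (Sum.inl '' {y | y ∈ s ∧ TA.Adj x y}).ncard :=
              Set.ncard_le_ncard hsub (Set.toFinite _)
          _ ≤ 2 := by
              rw [Set.ncard_image_of_injective _ Sum.inl_injective]
              exact hs.2 x hx
    · by_cases hy0 : y = xB
      · subst hy0
        have hsub : {q | q ∈ N ∧ J.Adj (Sum.inr y) q}
            ⊆ Sum.inr '' {z | z ∈ t ∧ TB.Adj y z} ∪ {Sum.inl xA} := by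
          rintro q ⟨hqN, hadj⟩
          rcases q with z | z
          · rcases (joinTree_adj_cross'.mp hadj) with ⟨rfl, _⟩
            exact Or.inr rfl
          · refine Or.inl ⟨z, ⟨?_, hadj⟩, rfl⟩
            rcases hqN with ⟨z', _, hz'eq⟩ | ⟨z', hz', hz'eq⟩
            · exact absurd hz'eq (by simp)
            · rwa [← Sum.inr_injective hz'eq]
        calc {q | q ∈ N ∧ J.Adj (Sum.inr y) q}.ncard
            ≤ (Sum.inr '' {z | z ∈ t ∧ TB.Adj y z} ∪ {Sum.inl xA} : Set (ι ⊕ κ)).ncard :=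
              Set.ncard_le_ncard hsub (Set.toFinite _)
          _ ≤ (Sum.inr '' {z | z ∈ t ∧ TB.Adj y z}).ncard
              + ({Sum.inl xA} : Set (ι ⊕ κ)).ncard := Set.ncard_union_le _ _
          _ ≤ 1 + 1 := by
              rw [Set.ncard_image_of_injective _ Sum.inr_injective, Set.ncard_singleton]
              exact add_le_add_left hdB 1
          _ ≤ 2 := le_refl 2
      · have hsub : {q | q ∈ N ∧ J.Adj (Sum.inr y) q}
            ⊆ Sum.inr '' {z | z ∈ t ∧ TB.Adj y z} := by
          rintro q ⟨hqN, hadj⟩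
          rcases q with z | z
          · exact absurd (joinTree_adj_cross'.mp hadj).2 hy0
          · refine ⟨z, ⟨?_, hadj⟩, rfl⟩
            rcases hqN with ⟨z', _, hz'eq⟩ | ⟨z', hz', hz'eq⟩
            · exact absurd hz'eq (by simp)
            · rwa [← Sum.inr_injective hz'eq]
        calc {q | q ∈ N ∧ J.Adj (Sum.inr y) q}.ncard
            ≤ (Sum.inr '' {z | z ∈ t ∧ TB.Adj y z}).ncard :=
              Set.ncard_le_ncard hsub (Set.toFinite _)
          _ ≤ 2 := by
              rw [Set.ncard_image_of_injective _ Sum.inr_injective]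
              exact ht.2 y hy

end JoinTree

/-! ## Gluing spaghetti tree decompositions along a separation -/

theorem glue_exists [Finite V] (G : SimpleGraph V) (A B : Set V) (k : ℕ)
    (hU : A ∪ B = Set.univ)
    (hsep : ∀ a b, a ∈ A → a ∉ B → b ∈ B → b ∉ A → ¬G.Adj a b)
    (tdA : SpaghettiTD (G.induce A)) (tdB : SpaghettiTD (G.induce B))
    (xA : tdA.ι) (xB : tdB.ι)
    (hxA : ∀ v (hvA : v ∈ A), v ∈ B → (⟨v, hvA⟩ : ↥A) ∈ tdA.bag xA ∧
      {y | (⟨v, hvA⟩ : ↥A) ∈ tdA.bag y ∧ tdA.tree.Adj xA y}.ncard ≤ 1)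
    (hxB : ∀ v (hvB : v ∈ B), v ∈ A → (⟨v, hvB⟩ : ↥B) ∈ tdB.bag xB ∧
      {z | (⟨v, hvB⟩ : ↥B) ∈ tdB.bag z ∧ tdB.tree.Adj xB z}.ncard ≤ 1)
    (hkA : ∀ x, (tdA.bag x).ncard ≤ k + 1) (hkB : ∀ y, (tdB.bag y).ncard ≤ k + 1) :
    ∃ td : SpaghettiTD G, ∀ p, (td.bag p).ncard ≤ k + 1 := by
  classical
  have hfinA := tdA.finι
  have hfinB := tdB.finι
  set J := joinTree tdA.tree tdB.tree xA xB with hJdef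
  set bg : tdA.ι ⊕ tdB.ι → Set V :=
    Sum.elim (fun x => Subtype.val '' tdA.bag x) (fun y => Subtype.val '' tdB.bag y)
    with hbgdef
  -- membership characterizations
  have memInl : ∀ (v : V) (x : tdA.ι),
      v ∈ bg (Sum.inl x) ↔ ∃ hv : v ∈ A, (⟨v, hv⟩ : ↥A) ∈ tdA.bag x := by
    intro v x
    constructor
    · rintro ⟨⟨v', hv'⟩, hmem, rfl⟩; exact ⟨hv', hmem⟩
    · rintro ⟨hv, hmem⟩; exact ⟨⟨v, hv⟩, hmem, rfl⟩
  have memInr : ∀ (v : V) (y : tdB.ι),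
      v ∈ bg (Sum.inr y) ↔ ∃ hv : v ∈ B, (⟨v, hv⟩ : ↥B) ∈ tdB.bag y := by
    intro v y
    constructor
    · rintro ⟨⟨v', hv'⟩, hmem, rfl⟩; exact ⟨hv', hmem⟩
    · rintro ⟨hv, hmem⟩; exact ⟨⟨v, hv⟩, hmem, rfl⟩
  -- the key path-set property
  have key : ∀ v : V, IsPathSet J {p | v ∈ bg p} := by
    intro v
    have hvAB : v ∈ A ∪ B := hU ▸ Set.mem_univ v
    by_cases hvA : v ∈ A
    · by_cases hvB : v ∈ B
      · -- common vertex
        have hNv : {p | v ∈ bg p} =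
            Sum.inl '' {x | (⟨v, hvA⟩ : ↥A) ∈ tdA.bag x}
              ∪ Sum.inr '' {y | (⟨v, hvB⟩ : ↥B) ∈ tdB.bag y} := by
          ext p
          rcases p with x | y
          · simp only [Set.mem_setOf_eq, memInl]
            constructor
            · rintro ⟨hv, hmem⟩
              exact Or.inl ⟨x, hmem, rfl⟩
            · rintro (⟨x', hx', hx'eq⟩ | ⟨y', _, hy'eq⟩)
              · cases Sum.inl_injective hx'eq; exact ⟨hvA, hx'⟩
              · exact absurd hy'eq (by simp)
          · simp only [Set.mem_setOf_eq, memInr]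
            constructor
            · rintro ⟨hv, hmem⟩
              exact Or.inr ⟨y, hmem, rfl⟩
            · rintro (⟨x', _, hx'eq⟩ | ⟨y', hy', hy'eq⟩)
              · exact absurd hx'eq (by simp)
              · cases Sum.inr_injective hy'eq; exact ⟨hvB, hy'⟩
        rw [hNv]
        exact isPathSet_join_union (tdA.bag_path ⟨v, hvA⟩) (tdB.bag_path ⟨v, hvB⟩)
          (hxA v hvA hvB).1 (hxB v hvB hvA).1 (hxA v hvA hvB).2 (hxB v hvB hvA).2
      · -- v in A only
        have hNv : {p | v ∈ bg p} = Sum.inl '' {x | (⟨v, hvA⟩ : ↥A) ∈ tdA.bag x} := by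
          ext p
          rcases p with x | y
          · simp only [Set.mem_setOf_eq, memInl]
            constructor
            · rintro ⟨hv, hmem⟩; exact ⟨x, hmem, rfl⟩
            · rintro ⟨x', hx', hx'eq⟩; cases Sum.inl_injective hx'eq; exact ⟨hvA, hx'⟩
          · simp only [Set.mem_setOf_eq, memInr]
            constructor
            · rintro ⟨hv, _⟩; exact absurd hv hvB
            · rintro ⟨x', _, hx'eq⟩; exact absurd hx'eq (by simp)
        rw [hNv]
        exact isPathSet_join_inl (tdA.bag_path ⟨v, hvA⟩)
    · -- v in B only
      have hvB : v ∈ B := hvAB.resolve_left hvA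
      have hNv : {p | v ∈ bg p} = Sum.inr '' {y | (⟨v, hvB⟩ : ↥B) ∈ tdB.bag y} := by
        ext p
        rcases p with x | y
        · simp only [Set.mem_setOf_eq, memInl]
          constructor
          · rintro ⟨hv, _⟩; exact absurd hv hvA
          · rintro ⟨y', _, hy'eq⟩; exact absurd hy'eq (by simp)
        · simp only [Set.mem_setOf_eq, memInr]
          constructor
          · rintro ⟨hv, hmem⟩; exact ⟨y, hmem, rfl⟩
          · rintro ⟨y', hy', hy'eq⟩; cases Sum.inr_injective hy'eq; exact ⟨hvB, hy'⟩
      rw [hNv]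
      exact isPathSet_join_inr (tdB.bag_path ⟨v, hvB⟩)
  -- assemble the decomposition
  haveI := tdA.finι
  haveI := tdB.finι
  refine ⟨⟨⟨tdA.ι ⊕ tdB.ι, inferInstance, J, joinTree_isTree tdA.isTree tdB.isTree, bg,
    ?_, ?_, fun v => (key v).1⟩, key⟩, ?_⟩
  · -- cover
    intro v
    have hvAB : v ∈ A ∪ B := hU ▸ Set.mem_univ v
    by_cases hvA : v ∈ A
    · obtain ⟨x, hx⟩ := tdA.bag_cover ⟨v, hvA⟩
      exact ⟨Sum.inl x, (memInl v x).mpr ⟨hvA, hx⟩⟩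
    · have hvB : v ∈ B := hvAB.resolve_left hvA
      obtain ⟨y, hy⟩ := tdB.bag_cover ⟨v, hvB⟩
      exact ⟨Sum.inr y, (memInr v y).mpr ⟨hvB, hy⟩⟩
  · -- edges
    intro u w huw
    have huAB : u ∈ A ∪ B := hU ▸ Set.mem_univ u
    have hwAB : w ∈ A ∪ B := hU ▸ Set.mem_univ w
    by_cases huA : u ∈ A <;> by_cases hwA : w ∈ A
    · obtain ⟨x, h1, h2⟩ :=
        tdA.bag_edge (show (G.induce A).Adj ⟨u, huA⟩ ⟨w, hwA⟩ from huw)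
      exact ⟨Sum.inl x, (memInl u x).mpr ⟨huA, h1⟩, (memInl w x).mpr ⟨hwA, h2⟩⟩
    · have hwB : w ∈ B := hwAB.resolve_left hwA
      by_cases huB : u ∈ B
      · obtain ⟨y, h1, h2⟩ :=
          tdB.bag_edge (show (G.induce B).Adj ⟨u, huB⟩ ⟨w, hwB⟩ from huw)
        exact ⟨Sum.inr y, (memInr u y).mpr ⟨huB, h1⟩, (memInr w y).mpr ⟨hwB, h2⟩⟩
      · exact absurd huw (hsep u w huA huB hwB hwA)
    · have huB : u ∈ B := huAB.resolve_left huA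
      by_cases hwB : w ∈ B
      · obtain ⟨y, h1, h2⟩ :=
          tdB.bag_edge (show (G.induce B).Adj ⟨u, huB⟩ ⟨w, hwB⟩ from huw)
        exact ⟨Sum.inr y, (memInr u y).mpr ⟨huB, h1⟩, (memInr w y).mpr ⟨hwB, h2⟩⟩
      · exact absurd huw.symm (hsep w u hwA hwB huB huA)
    · have huB : u ∈ B := huAB.resolve_left huA
      have hwB : w ∈ B := hwAB.resolve_left hwA
      obtain ⟨y, h1, h2⟩ :=
        tdB.bag_edge (show (G.induce B).Adj ⟨u, huB⟩ ⟨w, hwB⟩ from huw)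
      exact ⟨Sum.inr y, (memInr u y).mpr ⟨huB, h1⟩, (memInr w y).mpr ⟨hwB, h2⟩⟩
  · -- width bound
    rintro (x | y)
    · show (Subtype.val '' tdA.bag x).ncard ≤ k + 1
      rw [Set.ncard_image_of_injective _ Subtype.val_injective]
      exact hkA x
    · show (Subtype.val '' tdB.bag y).ncard ≤ k + 1
      rw [Set.ncard_image_of_injective _ Subtype.val_injective]
      exact hkB y

/-! ## Induced subgraph isomorphisms and small connectivity facts -/

noncomputable def induceInduceIso (G : SimpleGraph V) (A : Set V) (S : Set ↥A) :
    (G.induce A).induce S ≃g G.induce (Subtype.val '' S) where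
  toEquiv := Equiv.Set.image Subtype.val S Subtype.val_injective
  map_rel_iff' := Iff.rfl

noncomputable def induceUnivIso (G : SimpleGraph V) : G.induce Set.univ ≃g G where
  toEquiv := Equiv.Set.univ V
  map_rel_iff' := Iff.rfl

lemma sptw_le_of_iso [Finite V] [Finite W] {G : SimpleGraph V} {H : SimpleGraph W}
    (e : G ≃g H) {k : ℕ} (h : sptw H ≤ k) : sptw G ≤ k := by
  rw [sptw_le_iff] at h ⊢
  obtain ⟨td, htd⟩ := h
  exact ⟨td.ofIso e, fun x => (SpaghettiTD.ofIso_ncard e td x).le.trans (htd x)⟩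

lemma induce_singleton_connected (G : SimpleGraph V) (a : V) :
    (G.induce {a}).Connected := by
  have : Subsingleton ↥({a} : Set V) :=
    ⟨fun x y => Subtype.ext (x.2.trans y.2.symm)⟩
  exact connected_of_subsingleton _ ⟨⟨a, rfl⟩⟩

lemma induce_pair_connected (G : SimpleGraph V) {a b : V} (h : G.Adj a b) :
    (G.induce {a, b}).Connected := by
  have hmem : ∀ x : ↥({a, b} : Set V), x = ⟨a, Or.inl rfl⟩ ∨ x = ⟨b, Or.inr rfl⟩ := by
    rintro ⟨x, hx | hx⟩
    · exact Or.inl (Subtype.ext hx)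
    · exact Or.inr (Subtype.ext hx)
  have hadj : (G.induce {a, b}).Adj ⟨a, Or.inl rfl⟩ ⟨b, Or.inr rfl⟩ := h
  have : Nonempty ↥({a, b} : Set V) := ⟨⟨a, Or.inl rfl⟩⟩
  constructor
  intro x y
  rcases hmem x with rfl | rfl <;> rcases hmem y with rfl | rfl
  · exact SimpleGraph.Reachable.refl _
  · exact hadj.reachable
  · exact hadj.symm.reachable
  · exact SimpleGraph.Reachable.refl _

lemma image_val_diff_singleton {A : Set V} (S : Set ↥A) (x : ↥A) :
    Subtype.val '' (S \ {x}) = (Subtype.val '' S) \ {x.1} := by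
  ext z
  constructor
  · rintro ⟨⟨z', hz'⟩, ⟨hmem, hne⟩, rfl⟩
    exact ⟨⟨⟨z', hz'⟩, hmem, rfl⟩, fun he => hne (Subtype.ext he)⟩
  · rintro ⟨⟨⟨z', hz'⟩, hmem, rfl⟩, hne⟩
    exact ⟨⟨z', hz'⟩, ⟨hmem, fun he => hne (congrArg Subtype.val he)⟩, rfl⟩

/-- Walks in an induced subgraph cannot cross a partition without edges between
the parts. -/
lemma induce_walk_stay {G : SimpleGraph V} {S X Y : Set V}
    (hXY : ∀ x ∈ X, ∀ y ∈ Y, ¬G.Adj x y) (hS : S ⊆ X ∪ Y)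
    (hdisj : ∀ z, z ∈ X → z ∈ Y → False) :
    ∀ {a b : ↥S} (_ : (G.induce S).Walk a b), a.1 ∈ X → b.1 ∈ X := by
  intro a b p
  induction p with
  | nil => exact id
  | @cons u v w h q ih =>
    intro hu
    have hv : v.1 ∈ X := by
      rcases hS v.2 with hvX | hvY
      · exact hvX
      · exact absurd (h : G.Adj u.1 v.1) (hXY u.1 hu v.1 hvY)
    exact ih hv

/-- Walking towards `v`, the last vertex before first reaching `v` is a
neighbour of `v` reachable from the start avoiding `v`. -/
lemma exists_pred_neighbor {G : SimpleGraph V} {v : V} {s : Set V}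
    (hs : ∀ w, w ≠ v ↔ w ∈ s) :
    ∀ {a c : V} (_ : G.Walk a c) (_ : c = v) (ha : a ≠ v),
      ∃ (z : V) (hz : z ≠ v), G.Adj z v ∧
        (G.induce s).Reachable ⟨a, (hs a).mp ha⟩ ⟨z, (hs z).mp hz⟩ := by
  intro a c p
  induction p with
  | nil => rintro rfl ha; exact absurd rfl ha
  | @cons u b w h q ih =>
    intro hc ha
    by_cases hb : b = v
    · exact ⟨u, ha, hb ▸ h, SimpleGraph.Reachable.refl _⟩
    · obtain ⟨z, hz, hadj, hreach⟩ := ih hc hb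
      refine ⟨z, hz, hadj, SimpleGraph.Reachable.trans ?_ hreach⟩
      exact SimpleGraph.Adj.reachable
        (show (G.induce s).Adj ⟨u, (hs u).mp ha⟩ ⟨b, (hs b).mp hb⟩ from h)

/-! ## Blocks of the parts of a separation are blocks of the whole graph -/

lemma isBlock_of_induce {G : SimpleGraph V} {A B : Set V} (v₀ : V)
    (hU : A ∪ B = Set.univ)
    (hsep : ∀ a b, a ∈ A → a ∉ B → b ∈ B → b ∉ A → ¬G.Adj a b)
    (hI : A ∩ B ⊆ {v₀})
    (hnbr : v₀ ∈ A → v₀ ∈ B → ∃ w, w ∈ A ∧ w ∉ B ∧ G.Adj v₀ w)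
    {S : Set ↥A} (hS : IsBlock (G.induce A) S) :
    IsBlock G (Subtype.val '' S) := by
  obtain ⟨hne, hconn, hncv, hmax⟩ := hS
  have hmemU : ∀ z : V, z ∈ A ∪ B := Set.eq_univ_iff_forall.mp hU
  refine ⟨hne.image _, (induceInduceIso G A S).connected_iff.mp hconn, ?_, ?_⟩
  · -- no cut vertex
    intro w hw hne'
    obtain ⟨⟨w', hw'A⟩, hw'S, rfl⟩ := hw
    have hset : (Subtype.val '' S) \ {(⟨w', hw'A⟩ : ↥A).1}
        = Subtype.val '' (S \ {⟨w', hw'A⟩}) := (image_val_diff_singleton S _).symm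
    rw [hset] at hne' ⊢
    have hne'' : (S \ {(⟨w', hw'A⟩ : ↥A)}).Nonempty := by
      obtain ⟨z, z', hz', rfl⟩ := hne'
      exact ⟨z', hz'⟩
    exact (induceInduceIso G A _).connected_iff.mp (hncv _ hw'S hne'')
  · -- maximality
    intro S'' hsub hconn'' hncv''
    have hconf : S'' ⊆ A ∨ S'' ⊆ B := by
      by_contra hcon
      push_neg at hcon
      obtain ⟨h1, h2⟩ := hcon
      obtain ⟨a'', ha''S, ha''A⟩ := Set.not_subset.mp h1
      obtain ⟨b'', hb''S, hb''B⟩ := Set.not_subset.mp h2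
      have ha''B : a'' ∈ B := (hmemU a'').resolve_left ha''A
      have hb''A : b'' ∈ A := (hmemU b'').resolve_right hb''B
      by_cases hv₀AB : v₀ ∈ A ∩ B
      · have hb''v : b'' ≠ v₀ := fun he => hb''B (he ▸ hv₀AB.2)
        have ha''v : a'' ≠ v₀ := fun he => ha''A (he ▸ hv₀AB.1)
        have hTconn : (G.induce (S'' \ {v₀})).Connected := by
          by_cases hv₀S : v₀ ∈ S''
          · exact hncv'' v₀ hv₀S ⟨b'', hb''S, hb''v⟩
          · have hSeq : S'' \ {v₀} = S'' := by
              ext z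
              exact ⟨fun hz => hz.1, fun hz => ⟨hz, fun he => hv₀S (he ▸ hz)⟩⟩
            rw [hSeq]; exact hconn''
        obtain ⟨p⟩ := hTconn.preconnected ⟨b'', hb''S, hb''v⟩ ⟨a'', ha''S, ha''v⟩
        have hstay := induce_walk_stay (G := G) (X := A \ {v₀}) (Y := B \ {v₀})
          (by
            rintro x ⟨hxA, hxv⟩ y ⟨hyB, hyv⟩
            refine hsep x y hxA (fun hxB => hxv (hI ⟨hxA, hxB⟩)) hyB
              (fun hyA => hyv (hI ⟨hyA, hyB⟩)))
          (by
            rintro z ⟨hzS, hzv⟩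
            rcases hmemU z with h | h
            · exact Or.inl ⟨h, hzv⟩
            · exact Or.inr ⟨h, hzv⟩)
          (by rintro z ⟨hzA, hzv⟩ ⟨hzB, _⟩; exact hzv (hI ⟨hzA, hzB⟩))
          p ⟨hb''A, hb''v⟩
        exact ha''A hstay.1
      · have hdisj : ∀ z, z ∈ A → z ∈ B → False := by
          intro z hzA hzB
          have hz : z = v₀ := hI ⟨hzA, hzB⟩
          exact hv₀AB (hz ▸ ⟨hzA, hzB⟩)
        obtain ⟨p⟩ := hconn''.preconnected ⟨b'', hb''S⟩ ⟨a'', ha''S⟩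
        have hstay := induce_walk_stay (G := G) (X := A) (Y := B)
          (fun x hx y hy => hsep x y hx (fun h => hdisj x hx h) hy
            (fun h => hdisj y h hy))
          (fun z _ => hmemU z)
          hdisj p hb''A
        exact ha''A hstay
    rcases hconf with hA'' | hB''
    · -- pull back to A and use maximality there
      set S₀ : Set ↥A := {x : ↥A | x.1 ∈ S''} with hS₀
      have himg : Subtype.val '' S₀ = S'' := by
        ext z; constructor
        · rintro ⟨⟨z', hz'⟩, hz'', rfl⟩; exact hz''
        · intro hz; exact ⟨⟨z, hA'' hz⟩, hz, rfl⟩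
      have hsub0 : S ⊆ S₀ := fun x hx => hsub ⟨x, hx, rfl⟩
      have hconn0 : ((G.induce A).induce S₀).Connected := by
        refine (induceInduceIso G A S₀).connected_iff.mpr ?_
        rw [himg]; exact hconn''
      have hncv0 : NoCutVertex (G.induce A) S₀ := by
        intro x hx hne0
        have hval : Subtype.val '' (S₀ \ {x}) = S'' \ {x.1} := by
          rw [image_val_diff_singleton, himg]
        have hne1 : (S'' \ {x.1}).Nonempty := by
          rw [← hval]; exact hne0.image _
        have hc := hncv'' x.1 (by rw [← himg]; exact ⟨x, hx, rfl⟩) hne1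
        refine (induceInduceIso G A _).connected_iff.mpr ?_
        rw [hval]; exact hc
      have hfin := hmax S₀ hsub0 hconn0 hncv0
      rw [← himg, hfin]
    · -- S'' lands in B: then S must be the single vertex v₀, contradiction
      exfalso
      have hSv : ∀ x ∈ S, (x : ↥A).1 = v₀ := fun x hx =>
        hI ⟨x.2, hB'' (hsub ⟨x, hx, rfl⟩)⟩
      obtain ⟨x0, hx0⟩ := hne
      have hv₀A : v₀ ∈ A := hSv x0 hx0 ▸ x0.2
      have hv₀B : v₀ ∈ B := by
        have h0 := hB'' (hsub ⟨x0, hx0, rfl⟩)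
        rwa [hSv x0 hx0] at h0
      obtain ⟨w, hwA, hwB, hadj⟩ := hnbr hv₀A hv₀B
      have hvw : (⟨v₀, hv₀A⟩ : ↥A) ≠ ⟨w, hwA⟩ := by
        intro he
        have : v₀ = w := congrArg Subtype.val he
        exact hwB (this ▸ hv₀B)
      set P : Set ↥A := {⟨v₀, hv₀A⟩, ⟨w, hwA⟩} with hP
      have hSP : S ⊆ P := fun x hx => Or.inl (Subtype.ext (hSv x hx))
      have hconnP : ((G.induce A).induce P).Connected :=
        induce_pair_connected _ (show (G.induce A).Adj ⟨v₀, hv₀A⟩ ⟨w, hwA⟩ from hadj)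
      have hncvP : NoCutVertex (G.induce A) P := by
        intro x hx _
        rcases hx with rfl | rfl
        · rw [Set.pair_diff_left hvw]; exact induce_singleton_connected _ _
        · rw [Set.pair_diff_right hvw]; exact induce_singleton_connected _ _
      have hPS := hmax P hSP hconnP hncvP
      have hwS : (⟨w, hwA⟩ : ↥A) ∈ S := hPS ▸ Or.inr rfl
      have hwv : w = v₀ := hSv _ hwS
      exact hwB (hwv ▸ hv₀B)

/-! ## The main induction -/

lemma sptw_le_empty [Finite V] (G : SimpleGraph V) (h : IsEmpty V) (k : ℕ) :
    sptw G ≤ k := by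
  rw [sptw_le_iff]
  refine ⟨trivialSTD G, fun x => ?_⟩
  show (Set.univ : Set V).ncard ≤ k + 1
  rw [Set.ncard_univ, Nat.card_of_isEmpty]
  omega

lemma backward_aux (k : ℕ) : ∀ (n : ℕ) (V : Type) [Finite V] (G : SimpleGraph V),
    Nat.card V ≤ n →
    (∀ S : Set V, IsBlock G S → sptw (G.induce S) ≤ k) → sptw G ≤ k := by
  intro n
  induction n with
  | zero =>
    intro V _ G hcard hblk
    have hemp : IsEmpty V := by
      by_contra h
      rw [not_isEmpty_iff] at h
      have := Nat.card_pos (α := V)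
      omega
    exact sptw_le_empty G hemp k
  | succ n ih =>
    intro V _ G hcard hblk
    rcases isEmpty_or_nonempty V with hemp | hne
    · exact sptw_le_empty G hemp k
    by_cases hpre : G.Preconnected
    · by_cases hncv : NoCutVertex G Set.univ
      · -- the whole graph is a block
        have hblkU : IsBlock G Set.univ := by
          refine ⟨Set.univ_nonempty, ?_, hncv, fun S' hsub _ _ => Set.univ_subset_iff.mp hsub⟩
          exact (_root_.induceUnivIso G).connected_iff.mpr ((SimpleGraph.connected_iff G).mpr ⟨hpre, hne⟩)
        exact sptw_le_of_iso (_root_.induceUnivIso G).symm (hblk _ hblkU)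
      · -- there is a cut vertex
        unfold NoCutVertex at hncv
        push_neg at hncv
        obtain ⟨v, -, hvne, hvdisc⟩ := hncv
        set s : Set V := Set.univ \ {v} with hs
        have hsmem : ∀ w, w ≠ v ↔ w ∈ s := fun w =>
          ⟨fun h => ⟨trivial, h⟩, fun h => h.2⟩
        have hnconn : ¬(G.induce s).Preconnected := by
          intro hp
          exact hvdisc ((SimpleGraph.connected_iff _).mpr ⟨hp, hvne.to_subtype⟩)
        unfold SimpleGraph.Preconnected at hnconn
        push_neg at hnconn
        obtain ⟨xh, yh, hxy⟩ := hnconn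
        set R : Set V := {z | ∃ hz : z ∈ s, (G.induce s).Reachable xh ⟨z, hz⟩} with hR
        set A : Set V := insert v R with hA
        set B : Set V := insert v Aᶜ with hB
        have hvA : v ∈ A := Set.mem_insert v R
        have hvB : v ∈ B := Set.mem_insert v Aᶜ
        have hxhR : xh.1 ∈ R := ⟨xh.2, by exact SimpleGraph.Reachable.refl _⟩
        have hxhv : xh.1 ≠ v := xh.2.2
        have hyhv : yh.1 ≠ v := yh.2.2
        have hyhA : yh.1 ∉ A := by
          rintro (h | ⟨hz, hreach⟩)
          · exact hyhv h
          · exact hxy (by convert hreach)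
        have hxhB : xh.1 ∉ B := by
          rintro (h | h)
          · exact hxhv h
          · exact h (Set.mem_insert_iff.mpr (Or.inr hxhR))
        have hU : A ∪ B = Set.univ := by
          ext z
          simp only [Set.mem_union, Set.mem_univ, iff_true]
          by_cases hz : z ∈ A
          · exact Or.inl hz
          · exact Or.inr (Set.mem_insert_iff.mpr (Or.inr hz))
        have hI : A ∩ B ⊆ {v} := by
          rintro z ⟨hzA, hzB⟩
          rcases hzB with h | h
          · exact h
          · exact absurd hzA h
        have hsep : ∀ a b, a ∈ A → a ∉ B → b ∈ B → b ∉ A → ¬G.Adj a b := by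
          intro a b haA haB hbB hbA hadj
          have hav : a ≠ v := fun h => haB (h ▸ hvB)
          have hbv : b ≠ v := fun h => hbA (h ▸ hvA)
          have haR : a ∈ R := (Set.mem_insert_iff.mp haA).resolve_left hav
          obtain ⟨haz, hareach⟩ := haR
          have hbR : b ∈ R := by
            refine ⟨(hsmem b).mp hbv, hareach.trans (SimpleGraph.Adj.reachable ?_)⟩
            exact (hadj : G.Adj a b)
          exact hbA (Set.mem_insert_iff.mpr (Or.inr hbR))
        -- neighbours of v on each side
        obtain ⟨pxa⟩ := hpre xh.1 v
        obtain ⟨z, hzv, hzadj, hzreach⟩ := exists_pred_neighbor hsmem pxa rfl hxhv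
        have hzR : z ∈ R := by
          refine ⟨(hsmem z).mp hzv, ?_⟩
          refine SimpleGraph.Reachable.trans ?_ hzreach
          exact SimpleGraph.Reachable.refl _
        have hnbrA : v ∈ A → v ∈ B → ∃ w, w ∈ A ∧ w ∉ B ∧ G.Adj v w := by
          intro _ _
          refine ⟨z, Set.mem_insert_iff.mpr (Or.inr hzR), ?_, hzadj.symm⟩
          rintro (h | h)
          · exact hzv h
          · exact h (Set.mem_insert_iff.mpr (Or.inr hzR))
        obtain ⟨pyb⟩ := hpre yh.1 v
        obtain ⟨z', hz'v, hz'adj, hz'reach⟩ := exists_pred_neighbor hsmem pyb rfl hyhv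
        have hz'A : z' ∉ A := by
          rintro (h | ⟨hz'', hreach''⟩)
          · exact hz'v h
          · refine hxy ?_
            have h1 : (G.induce s).Reachable yh ⟨z', hz''⟩ := by convert hz'reach
            exact hreach''.trans h1.symm
        have hnbrB : v ∈ B → v ∈ A → ∃ w, w ∈ B ∧ w ∉ A ∧ G.Adj v w := by
          intro _ _
          exact ⟨z', Set.mem_insert_iff.mpr (Or.inr hz'A), hz'A, hz'adj.symm⟩
        have hAne : A ≠ Set.univ := fun h => hyhA (by rw [h]; trivial)
        have hBne : B ≠ Set.univ := fun h => hxhB (by rw [h]; trivial)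
        have hcardA : Nat.card ↥A ≤ n := by
          have h1 : A.ncard < (Set.univ : Set V).ncard :=
            Set.ncard_lt_ncard (Set.ssubset_univ_iff.mpr hAne) Set.finite_univ
          rw [Set.ncard_univ] at h1
          have h2 : Nat.card ↥A = A.ncard := Nat.card_coe_set_eq A
          omega
        have hcardB : Nat.card ↥B ≤ n := by
          have h1 : B.ncard < (Set.univ : Set V).ncard :=
            Set.ncard_lt_ncard (Set.ssubset_univ_iff.mpr hBne) Set.finite_univ
          rw [Set.ncard_univ] at h1
          have h2 : Nat.card ↥B = B.ncard := Nat.card_coe_set_eq B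
          omega
        have hblkA : ∀ S' : Set ↥A, IsBlock (G.induce A) S' →
            sptw ((G.induce A).induce S') ≤ k :=
          fun S' hS' => sptw_le_of_iso (induceInduceIso G A S')
            (hblk _ (isBlock_of_induce v hU hsep hI hnbrA hS'))
        have hU' : B ∪ A = Set.univ := by rw [Set.union_comm]; exact hU
        have hI' : B ∩ A ⊆ {v} := by rw [Set.inter_comm]; exact hI
        have hsep' : ∀ a b, a ∈ B → a ∉ A → b ∈ A → b ∉ B → ¬G.Adj a b :=
          fun a b h1 h2 h3 h4 hadj => hsep b a h3 h4 h1 h2 hadj.symm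
        have hblkB : ∀ S' : Set ↥B, IsBlock (G.induce B) S' →
            sptw ((G.induce B).induce S') ≤ k :=
          fun S' hS' => sptw_le_of_iso (induceInduceIso G B S')
            (hblk _ (isBlock_of_induce v hU' hsep' hI' hnbrB hS'))
        obtain ⟨tdA, htdA⟩ := (sptw_le_iff _ k).mp (ih ↥A (G.induce A) hcardA hblkA)
        obtain ⟨tdB, htdB⟩ := (sptw_le_iff _ k).mp (ih ↥B (G.induce B) hcardB hblkB)
        haveI := tdA.finι
        haveI := tdB.finι
        obtain ⟨xA, hxAmem, hxAdeg⟩ :=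
          exists_path_endpoint tdA.tree tdA.isTree.IsAcyclic (tdA.bag_conn ⟨v, hvA⟩)
        obtain ⟨xB, hxBmem, hxBdeg⟩ :=
          exists_path_endpoint tdB.tree tdB.isTree.IsAcyclic (tdB.bag_conn ⟨v, hvB⟩)
        rw [sptw_le_iff]
        refine glue_exists G A B k hU hsep tdA tdB xA xB ?_ ?_ htdA htdB
        · intro v' hv'A hv'B
          have hv' : v' = v := hI ⟨hv'A, hv'B⟩
          subst hv'
          exact ⟨hxAmem, hxAdeg⟩
        · intro v' hv'B hv'A
          have hv' : v' = v := hI ⟨hv'A, hv'B⟩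
          subst hv'
          exact ⟨hxBmem, hxBdeg⟩
    · -- disconnected case
      unfold SimpleGraph.Preconnected at hpre
      push_neg at hpre
      obtain ⟨x, y, hxy⟩ := hpre
      set A : Set V := {z | G.Reachable x z} with hA
      set B : Set V := Aᶜ with hB
      have hxA : x ∈ A := SimpleGraph.Reachable.refl x
      have hyB : y ∈ B := hxy
      have hU : A ∪ B = Set.univ := Set.union_compl_self A
      have hsep : ∀ a b, a ∈ A → a ∉ B → b ∈ B → b ∉ A → ¬G.Adj a b := by
        intro a b haA _ hbB _ hadj
        exact hbB ((haA : G.Reachable x a).trans hadj.reachable)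
      have hI : A ∩ B ⊆ {x} := fun z hz => absurd hz.1 hz.2
      have hnbrA : x ∈ A → x ∈ B → ∃ w, w ∈ A ∧ w ∉ B ∧ G.Adj x w :=
        fun h1 h2 => absurd h1 h2
      have hnbrB : x ∈ B → x ∈ A → ∃ w, w ∈ B ∧ w ∉ A ∧ G.Adj x w :=
        fun h1 _ => absurd hxA h1
      have hyA : y ∉ A := hxy
      have hxB : x ∉ B := fun hc => hc hxA
      have hAne : A ≠ Set.univ := fun h => hyA (by rw [h]; trivial)
      have hBne : B ≠ Set.univ := fun h => hxB (by rw [h]; trivial)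
      have hcardA : Nat.card ↥A ≤ n := by
        have h1 : A.ncard < (Set.univ : Set V).ncard :=
          Set.ncard_lt_ncard (Set.ssubset_univ_iff.mpr hAne) Set.finite_univ
        rw [Set.ncard_univ] at h1
        have h2 : Nat.card ↥A = A.ncard := Nat.card_coe_set_eq A
        omega
      have hcardB : Nat.card ↥B ≤ n := by
        have h1 : B.ncard < (Set.univ : Set V).ncard :=
          Set.ncard_lt_ncard (Set.ssubset_univ_iff.mpr hBne) Set.finite_univ
        rw [Set.ncard_univ] at h1
        have h2 : Nat.card ↥B = B.ncard := Nat.card_coe_set_eq B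
        omega
      have hblkA : ∀ S' : Set ↥A, IsBlock (G.induce A) S' →
          sptw ((G.induce A).induce S') ≤ k :=
        fun S' hS' => sptw_le_of_iso (induceInduceIso G A S')
          (hblk _ (isBlock_of_induce x hU hsep hI hnbrA hS'))
      have hU' : B ∪ A = Set.univ := by rw [Set.union_comm]; exact hU
      have hI' : B ∩ A ⊆ {x} := by rw [Set.inter_comm]; exact hI
      have hsep' : ∀ a b, a ∈ B → a ∉ A → b ∈ A → b ∉ B → ¬G.Adj a b :=
        fun a b h1 h2 h3 h4 hadj => hsep b a h3 h4 h1 h2 hadj.symm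
      have hblkB : ∀ S' : Set ↥B, IsBlock (G.induce B) S' →
          sptw ((G.induce B).induce S') ≤ k :=
        fun S' hS' => sptw_le_of_iso (induceInduceIso G B S')
          (hblk _ (isBlock_of_induce x hU' hsep' hI' hnbrB hS'))
      obtain ⟨tdA, htdA⟩ := (sptw_le_iff _ k).mp (ih ↥A (G.induce A) hcardA hblkA)
      obtain ⟨tdB, htdB⟩ := (sptw_le_iff _ k).mp (ih ↥B (G.induce B) hcardB hblkB)
      haveI := tdA.finι
      haveI := tdB.finι
      haveI hneA : Nonempty tdA.ι := tdA.isTree.isConnected.nonempty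
      haveI hneB : Nonempty tdB.ι := tdB.isTree.isConnected.nonempty
      rw [sptw_le_iff]
      refine glue_exists G A B k hU hsep tdA tdB (Classical.arbitrary _)
        (Classical.arbitrary _) ?_ ?_ htdA htdB
      · intro v' hv'A hv'B
        exact absurd hv'A hv'B
      · intro v' hv'B hv'A
        exact absurd hv'A hv'B

/-- For every positive integer `k`, a finite simple graph has spaghetti treewidth at
most `k` iff every block of it has spaghetti treewidth at most `k`. -/
theorem statement5 {V : Type} [Fintype V] (G : SimpleGraph V) (k : ℕ) (hk : 1 ≤ k) :
    sptw G ≤ k ↔ ∀ S : Set V, IsBlock G S → sptw (G.induce S) ≤ k := by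
  constructor
  · intro h S _
    rw [sptw_le_iff] at h ⊢
    obtain ⟨td, htd⟩ := h
    exact ⟨td.restrict S, fun x => le_trans (td.restrict_ncard S x) (htd x)⟩
  · intro h
    exact backward_aux k (Nat.card V) V G le_rfl h
end

section
/- Let G be a finite simple graph with at least two vertices and let v be a vertex of G adjacent to all other vertices of G. Then spctw(G) = sptw(G) = dptw(G) = pw(G) = pw(G − v) + 1, i.e., the special treewidth, spaghetti treewidth, directed spaghetti treewidth, and pathwidth of G are all equal, and all equal one plus the pathwidth of G − v. -/
open SimpleGraph

section WalkLemmas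
variable {ι : Type} {T : SimpleGraph ι}

lemma getVert_mem_support {a b : ι} (p : T.Walk a b) (i : ℕ) : p.getVert i ∈ p.support := by
  induction p generalizing i with
  | nil => simp [SimpleGraph.Walk.getVert]
  | cons h q ih =>
    cases i with
    | zero => simp [SimpleGraph.Walk.getVert]
    | succ n => simp only [SimpleGraph.Walk.getVert_cons_succ, SimpleGraph.Walk.support_cons,
        List.mem_cons]; exact Or.inr (ih n)

lemma mem_support_iff_getVert {a b x : ι} (p : T.Walk a b) :
    x ∈ p.support ↔ ∃ i ≤ p.length, p.getVert i = x := by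
  constructor
  · intro hx
    induction p with
    | nil => exact ⟨0, le_rfl, by simpa [SimpleGraph.Walk.getVert] using
        (SimpleGraph.Walk.mem_support_nil_iff.mp hx).symm⟩
    | cons h q ih =>
      rcases List.mem_cons.mp (by simpa using hx) with rfl | hx'
      · exact ⟨0, Nat.zero_le _, rfl⟩
      · rcases ih hx' with ⟨i, hi, hgi⟩
        exact ⟨i + 1, by simpa using Nat.succ_le_succ hi, hgi⟩
  · rintro ⟨i, _, rfl⟩; exact getVert_mem_support p i

lemma getVert_injective {a b : ι} {p : T.Walk a b} (hp : p.IsPath) :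
    ∀ i j, i ≤ p.length → j ≤ p.length → p.getVert i = p.getVert j → i = j := by
  induction p with
  | nil => intro i j hi hj _; simp only [SimpleGraph.Walk.length_nil, Nat.le_zero] at hi hj; omega
  | cons h q ih =>
    intro i j hi hj hij
    rw [SimpleGraph.Walk.cons_isPath_iff] at hp
    cases i with
    | zero =>
      cases j with
      | zero => rfl
      | succ n =>
        exfalso
        rw [SimpleGraph.Walk.getVert_zero, SimpleGraph.Walk.getVert_cons_succ] at hij
        exact hp.2 (hij ▸ getVert_mem_support q n)
    | succ n =>
      cases j with
      | zero =>
        exfalso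
        rw [SimpleGraph.Walk.getVert_zero, SimpleGraph.Walk.getVert_cons_succ] at hij
        exact hp.2 (hij ▸ getVert_mem_support q n)
      | succ m =>
        simp only [SimpleGraph.Walk.getVert_cons_succ] at hij
        simp only [SimpleGraph.Walk.length_cons] at hi hj
        exact congrArg Nat.succ (ih hp.1 n m (by omega) (by omega) hij)


section WalkLemmas2
variable {ι : Type} {T : SimpleGraph ι}

/-- Segment of a path between positions. -/
lemma segment_lemma {a b : ι} (P : T.Walk a b) (hP : P.IsPath) :
    ∀ i j k : ℕ, i ≤ j → j ≤ k → k ≤ P.length →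
      ∃ q : T.Walk (P.getVert i) (P.getVert k), q.IsPath ∧ P.getVert j ∈ q.support ∧
        ∀ z ∈ q.support, z ∈ P.support := by
  induction P with
  | nil =>
    intro i j k hij hjk hk
    simp only [SimpleGraph.Walk.length_nil, Nat.le_zero] at hk
    subst hk
    have hi : i = 0 := by omega
    have hj : j = 0 := by omega
    subst hi; subst hj
    exact ⟨SimpleGraph.Walk.nil, SimpleGraph.Walk.IsPath.nil, by simp, by simp⟩
  | @cons u v w h p ih =>
    intro i j k hij hjk hk
    rw [SimpleGraph.Walk.cons_isPath_iff] at hP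
    cases i with
    | succ n =>
      obtain ⟨j', rfl⟩ : ∃ j', j = j' + 1 := ⟨j - 1, by omega⟩
      obtain ⟨k', rfl⟩ : ∃ k', k = k' + 1 := ⟨k - 1, by omega⟩
      simp only [SimpleGraph.Walk.getVert_cons_succ]
      obtain ⟨q, hq1, hq2, hq3⟩ := ih hP.1 n j' k' (by omega) (by omega)
        (by simpa using Nat.succ_le_succ_iff.mp (by simpa using hk))
      exact ⟨q, hq1, hq2, fun z hz => by
        simp only [SimpleGraph.Walk.support_cons, List.mem_cons]; exact Or.inr (hq3 z hz)⟩
    | zero =>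
      cases k with
      | zero =>
        have hj : j = 0 := by omega
        subst hj
        refine ⟨SimpleGraph.Walk.nil, SimpleGraph.Walk.IsPath.nil, by simp, ?_⟩
        intro z hz
        have hz' : z = (SimpleGraph.Walk.cons h p).getVert 0 := by simpa using hz
        rw [hz']
        exact getVert_mem_support _ 0
      | succ k' =>
        -- q := cons h (segment of p from 0 to k')
        obtain ⟨q, hq1, hq2, hq3⟩ := ih hP.1 0 (j - 1) k' (by omega) (by omega)
          (by simpa using Nat.succ_le_succ_iff.mp (by simpa using hk))
        have hzero : p.getVert 0 = v := p.getVert_zero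
        let q' : T.Walk v (p.getVert k') := q.copy hzero rfl
        have hsup : ∀ z ∈ q'.support, z ∈ p.support := by
          intro z hz
          exact hq3 z (by simpa [q'] using hz)
        have hQpath : (SimpleGraph.Walk.cons h q').IsPath := by
          rw [SimpleGraph.Walk.cons_isPath_iff]
          exact ⟨by simpa [q'] using hq1, fun hu => hP.2 (hsup u hu)⟩
        refine ⟨(SimpleGraph.Walk.cons h q').copy rfl rfl, by exact hQpath, ?_, ?_⟩
        · cases j with
          | zero =>
            exact (SimpleGraph.Walk.cons h q').start_mem_support
          | succ j' =>
            simp only [SimpleGraph.Walk.getVert_cons_succ, SimpleGraph.Walk.support_copy,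
              SimpleGraph.Walk.support_cons, List.mem_cons]
            right
            show p.getVert j' ∈ q'.support
            simpa [q'] using (by simpa using hq2 : p.getVert j' ∈ q.support)
        · intro z hz
          change z ∈ (SimpleGraph.Walk.cons h q').support at hz
          simp only [SimpleGraph.Walk.support_cons, List.mem_cons] at hz
          rcases hz with rfl | hz
          · exact (SimpleGraph.Walk.cons h p).start_mem_support
          · simp only [SimpleGraph.Walk.support_cons, List.mem_cons]
            exact Or.inr (hsup z hz)

/-- First vertex of a walk belonging to a set. -/
lemma first_in_set {X : Set ι} : ∀ {a b : ι} (p : T.Walk a b), b ∈ X →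
    ∃ (w : ι) (q : T.Walk a w) (r : T.Walk w b),
      q.append r = p ∧ w ∈ X ∧ ∀ z ∈ q.support, z ∈ X → z = w := by
  intro a b p
  induction p with
  | nil => intro hb; exact ⟨_, SimpleGraph.Walk.nil, SimpleGraph.Walk.nil, rfl, hb, by simp⟩
  | @cons u v w h p ih =>
    intro hb
    by_cases hu : u ∈ X
    · exact ⟨u, SimpleGraph.Walk.nil, SimpleGraph.Walk.cons h p, rfl, hu, by simp⟩
    · obtain ⟨w', q, r, heq, hw', hmin⟩ := ih hb
      refine ⟨w', SimpleGraph.Walk.cons h q, r, by rw [SimpleGraph.Walk.cons_append, heq], hw', ?_⟩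
      intro z hz hzX
      simp only [SimpleGraph.Walk.support_cons, List.mem_cons] at hz
      rcases hz with rfl | hz
      · exact absurd hzX hu
      · exact hmin z hz hzX

/-- Append two paths meeting only at the junction. -/
lemma isPath_append_of_meet {a w c : ι} {p : T.Walk a w} {q : T.Walk w c}
    (hp : p.IsPath) (hq : q.IsPath) (hmeet : ∀ z ∈ p.support, z ∈ q.support → z = w) :
    (p.append q).IsPath := by
  rw [SimpleGraph.Walk.isPath_def, SimpleGraph.Walk.support_append]
  apply List.Nodup.append hp.support_nodup
  · have := hq.support_nodup
    rw [q.support_eq_cons] at this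
    exact this.of_cons
  · intro z hzp hzq
    have hzw : z = w := hmeet z hzp (List.mem_of_mem_tail hzq)
    subst hzw
    have := hq.support_nodup
    rw [q.support_eq_cons] at this
    exact (List.nodup_cons.mp this).1 hzq

section TreeLemmas
attribute [local instance] Classical.propDecidable
variable {ι : Type} {T : SimpleGraph ι} (hT : T.IsTree)

/-- The unique path between two vertices of a tree. -/
noncomputable def tpath (hT : T.IsTree) (x y : ι) : T.Walk x y :=
  (hT.existsUnique_path x y).choose

lemma tpath_isPath (x y : ι) : (tpath hT x y).IsPath :=
  (hT.existsUnique_path x y).choose_spec.1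

lemma tpath_eq {x y : ι} (p : T.Walk x y) (hp : p.IsPath) : p = tpath hT x y :=
  (hT.existsUnique_path x y).choose_spec.2 p hp

lemma tpath_support_subset {x y : ι} (p : T.Walk x y) :
    ∀ z ∈ (tpath hT x y).support, z ∈ p.support := by
  intro z hz
  have h1 : p.bypass = tpath hT x y := tpath_eq hT p.bypass p.bypass_isPath
  exact p.support_bypass_subset (h1 ▸ hz)

/-- If `C` induces a connected subgraph, any two of its points are joined by a walk inside `C`. -/
lemma reach_of_induce_connected {C : Set ι} (hC : (T.induce C).Connected)
    {x y : ι} (hx : x ∈ C) (hy : y ∈ C) :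
    ∃ p : T.Walk x y, ∀ z ∈ p.support, z ∈ C := by
  obtain ⟨q⟩ := hC.preconnected ⟨x, hx⟩ ⟨y, hy⟩
  let f : T.induce C →g T := ⟨Subtype.val, fun {a b} h => h⟩
  refine ⟨(q.map f).copy rfl rfl, ?_⟩
  intro z hz
  rw [SimpleGraph.Walk.support_copy, SimpleGraph.Walk.support_map] at hz
  obtain ⟨z', _, rfl⟩ := List.mem_map.mp hz
  exact z'.2

lemma induce_connected_of_reach {C : Set ι} (hne : C.Nonempty)
    (h : ∀ x ∈ C, ∀ y ∈ C, ∃ p : T.Walk x y, ∀ z ∈ p.support, z ∈ C) :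
    (T.induce C).Connected := by
  rw [SimpleGraph.connected_iff]
  refine ⟨?_, ⟨⟨hne.choose, hne.choose_spec⟩⟩⟩
  rintro ⟨x, hx⟩ ⟨y, hy⟩
  obtain ⟨p, hp⟩ := h x hx y hy
  clear h
  induction p with
  | nil => rfl
  | @cons u v w huv q ih =>
    have hv : v ∈ C := hp v (by simp)
    have hadj : (T.induce C).Adj ⟨u, hx⟩ ⟨v, hv⟩ := huv
    exact hadj.reachable.trans (ih hv hy (fun z hz => hp z (by simp [hz])))

/-- Support of the tree path between two points of a connected set stays in the set. -/
lemma tpath_support_mem {C : Set ι} (hC : (T.induce C).Connected)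
    {x y : ι} (hx : x ∈ C) (hy : y ∈ C) : ∀ z ∈ (tpath hT x y).support, z ∈ C := by
  obtain ⟨p, hp⟩ := reach_of_induce_connected hC hx hy
  intro z hz
  exact hp z (tpath_support_subset hT p z hz)

/-- Helly property for three pairwise-intersecting connected subsets of a tree. -/
lemma tree_helly (hT : T.IsTree) {A B C : Set ι} (hA : (T.induce A).Connected) (hB : (T.induce B).Connected)
    (hC : (T.induce C).Connected)
    {a b c : ι} (haB : a ∈ B) (haC : a ∈ C) (hbA : b ∈ A) (hbC : b ∈ C)
    (hcA : c ∈ A) (hcB : c ∈ B) :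
    ∃ w, w ∈ A ∧ w ∈ B ∧ w ∈ C := by
  classical
  set P := tpath hT a b with hP
  set Q := tpath hT b c with hQ
  -- P ⊆ C, Q ⊆ A, tpath a c ⊆ B
  have hPC : ∀ z ∈ P.support, z ∈ C := tpath_support_mem hT hC haC hbC
  have hQA : ∀ z ∈ Q.support, z ∈ A := tpath_support_mem hT hA hbA hcA
  have hRB : ∀ z ∈ (tpath hT a c).support, z ∈ B := tpath_support_mem hT hB haB hcB
  obtain ⟨w, q, r, heq, hwQ, hmin⟩ := first_in_set (X := {z | z ∈ Q.support}) P
    (Q.start_mem_support)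
  have hqP : q.IsPath := by
    have := tpath_isPath hT a b
    rw [← hP, ← heq] at this
    exact this.of_append_left
  have hqsub : ∀ z ∈ q.support, z ∈ P.support := by
    intro z hz
    rw [← heq, SimpleGraph.Walk.mem_support_append_iff]
    exact Or.inl hz
  -- split Q at w
  have hq2 : (Q.dropUntil w hwQ).IsPath := (tpath_isPath hT b c).dropUntil hwQ
  have hW : (q.append (Q.dropUntil w hwQ)).IsPath := by
    apply isPath_append_of_meet hqP hq2
    intro z hzq hzd
    exact hmin z hzq (Q.support_dropUntil_subset hwQ hzd)
  have hWeq : q.append (Q.dropUntil w hwQ) = tpath hT a c := tpath_eq hT _ hW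
  have hwin : w ∈ (tpath hT a c).support := by
    rw [← hWeq, SimpleGraph.Walk.mem_support_append_iff]
    exact Or.inl q.end_mem_support
  exact ⟨w, hQA w hwQ, hRB w hwin, hPC w (hqsub w q.end_mem_support)⟩

/-- In a tree, the unique path is a geodesic. -/
lemma tpath_length (x y : ι) : (tpath hT x y).length = T.dist x y := by
  have hr : T.Reachable x y := hT.isConnected.preconnected x y
  obtain ⟨p, hp⟩ := hr.exists_walk_length_eq_dist
  have h1 : T.dist x y ≤ (tpath hT x y).length := SimpleGraph.dist_le _
  have h2 : (tpath hT x y).length ≤ p.length := by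
    calc (tpath hT x y).length = p.bypass.length := by
          rw [tpath_eq hT p.bypass p.bypass_isPath]
        _ ≤ p.length := p.length_bypass_le
  omega

section PathGraph

lemma pathGraph_walk {m : ℕ} : ∀ (d : ℕ) (i j : Fin m), i.val + d = j.val →
    ∃ p : (pathGraph m).Walk i j, p.length = d ∧ ∀ z ∈ p.support, i ≤ z ∧ z ≤ j := by
  intro d
  induction d with
  | zero =>
    intro i j hij
    have : i = j := Fin.ext (by omega)
    subst this
    exact ⟨SimpleGraph.Walk.nil, rfl, by simp⟩
  | succ n ih =>
    intro i j hij
    have hlt : i.val + 1 < m := by omega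
    set i' : Fin m := ⟨i.val + 1, by omega⟩ with hi'
    have hadj : (pathGraph m).Adj i i' := pathGraph_adj.mpr (Or.inl rfl)
    obtain ⟨p, hlen, hsup⟩ := ih i' j (by simp [hi']; omega)
    refine ⟨SimpleGraph.Walk.cons hadj p, by simp [hlen], ?_⟩
    intro z hz
    rcases List.mem_cons.mp (by simpa using hz) with rfl | hz'
    · exact ⟨le_refl _, by rw [Fin.le_def]; omega⟩
    · obtain ⟨h1, h2⟩ := hsup z hz'
      rw [Fin.le_def] at h1 h2 ⊢
      simp only [hi'] at h1
      omega

lemma pathGraph_walk_length {m : ℕ} {i j : Fin m} (p : (pathGraph m).Walk i j) :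
    j.val ≤ i.val + p.length ∧ i.val ≤ j.val + p.length := by
  induction p with
  | nil => omega
  | @cons u v w h q ih =>
    rcases pathGraph_adj.mp h with h1 | h1 <;>
      simp only [SimpleGraph.Walk.length_cons] <;> omega

lemma pathGraph_dist {m : ℕ} {i j : Fin m} (hij : i ≤ j) :
    (pathGraph m).dist i j = j.val - i.val := by
  rw [Fin.le_def] at hij
  obtain ⟨p, hlen, -⟩ := pathGraph_walk (j.val - i.val) i j (by omega)
  have h1 : (pathGraph m).dist i j ≤ j.val - i.val := hlen ▸ SimpleGraph.dist_le p
  obtain ⟨q, hq⟩ := (p.reachable).exists_walk_length_eq_dist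
  have h2 := pathGraph_walk_length q
  omega

lemma pathGraph_isAcyclic {m : ℕ} : (pathGraph m).IsAcyclic := by
  rw [isAcyclic_iff_forall_adj_isBridge]
  have key : ∀ (x y : Fin m), x.val + 1 = y.val → (pathGraph m).IsBridge s(x, y) := by
    intro x y hxy
    rw [isBridge_iff_adj_and_forall_walk_mem_edges]
    have main : ∀ {s t : Fin m} (p : (pathGraph m).Walk s t), s.val ≤ x.val → x.val < t.val →
        s(x, y) ∈ p.edges := by
      intro s t p
      induction p with
      | nil => intro h1 h2; omega
      | @cons u v w h q ih =>
        intro h1 h2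
        rcases pathGraph_adj.mp h with h3 | h3
        · by_cases hux : u.val = x.val
          · have hu : u = x := Fin.ext hux
            have hv : v = y := Fin.ext (by omega)
            subst hu; subst hv
            simp
          · rw [SimpleGraph.Walk.edges_cons]
            exact List.mem_cons.mpr (Or.inr (ih (by omega) h2))
        · rw [SimpleGraph.Walk.edges_cons]
          exact List.mem_cons.mpr (Or.inr (ih (by omega) h2))
    intro p
    exact main p le_rfl (by omega)
  intro x y h
  rcases pathGraph_adj.mp h with h1 | h1
  · exact key x y h1
  · rw [Sym2.eq_swap]
    exact key y x h1

lemma pathGraph_isTree {m : ℕ} (hm : 0 < m) : (pathGraph m).IsTree := by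
  obtain ⟨n, rfl⟩ : ∃ n, m = n + 1 := ⟨m - 1, by omega⟩
  exact ⟨pathGraph_connected n, pathGraph_isAcyclic⟩

/-- A convex nonempty subset of the path graph induces a connected subgraph. -/
lemma pathGraph_induce_connected {m : ℕ} {S : Set (Fin m)} (hne : S.Nonempty)
    (hconv : ∀ i j k : Fin m, i ≤ j → j ≤ k → i ∈ S → k ∈ S → j ∈ S) :
    ((pathGraph m).induce S).Connected := by
  apply induce_connected_of_reach hne
  intro x hx y hy
  rcases le_total x y with hxy | hxy
  · obtain ⟨p, -, hsup⟩ := pathGraph_walk (y.val - x.val) x y (by rw [Fin.le_def] at hxy; omega)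
    exact ⟨p, fun z hz => hconv x z y (hsup z hz).1 (hsup z hz).2 hx hy⟩
  · obtain ⟨p, -, hsup⟩ := pathGraph_walk (x.val - y.val) y x (by rw [Fin.le_def] at hxy; omega)
    refine ⟨p.reverse, fun z hz => ?_⟩
    rw [SimpleGraph.Walk.support_reverse, List.mem_reverse] at hz
    exact hconv y z x (hsup z hz).1 (hsup z hz).2 hy hx

lemma ncard_fin_le_of_val_mem {m : ℕ} {S : Set (Fin m)} {t : Set ℕ}
    (h : ∀ x ∈ S, x.val ∈ t) (ht : t.Finite) : S.ncard ≤ t.ncard :=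
  Set.ncard_le_ncard_of_injOn Fin.val h (fun a _ b _ hab => Fin.ext hab) ht

lemma ncard_fin_le_one {m : ℕ} {S : Set (Fin m)} {n : ℕ}
    (h : ∀ x ∈ S, x.val = n) : S.ncard ≤ 1 := by
  have := ncard_fin_le_of_val_mem (t := {n}) (fun x hx => h x hx) (Set.finite_singleton n)
  simpa using this

lemma ncard_fin_le_two {m : ℕ} {S : Set (Fin m)} {n₁ n₂ : ℕ}
    (h : ∀ x ∈ S, x.val = n₁ ∨ x.val = n₂) : S.ncard ≤ 2 := by
  have := ncard_fin_le_of_val_mem (t := {n₁, n₂}) (fun x hx => h x hx) (Set.toFinite _)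
  calc S.ncard ≤ ({n₁, n₂} : Set ℕ).ncard := this
    _ ≤ 2 := by
      refine le_trans (Set.ncard_insert_le _ _) ?_
      simp

end PathGraph

section StructLemma
attribute [local instance] Classical.propDecidable
variable {ι : Type} {T : SimpleGraph ι}

lemma path_of_degree_two [Finite ι] (hT : T.IsTree) {C : Set ι}
    (hC : (T.induce C).Connected) (hne : C.Nonempty)
    (hdeg : ∀ x ∈ C, {y | y ∈ C ∧ T.Adj x y}.ncard ≤ 2) :
    ∃ (a b : ι) (P : T.Walk a b), P.IsPath ∧ ∀ z, z ∈ P.support ↔ z ∈ C := by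
  classical
  have : Fintype ι := Fintype.ofFinite ι
  -- pick a diametral pair in C
  obtain ⟨p, hp, hmax⟩ := (C.toFinset ×ˢ C.toFinset).exists_max_image
    (fun p => T.dist p.1 p.2)
    ⟨(hne.choose, hne.choose), by simp [Set.mem_toFinset, hne.choose_spec]⟩
  obtain ⟨a, b⟩ := p
  simp only [Finset.mem_product, Set.mem_toFinset] at hp
  obtain ⟨ha, hb⟩ := hp
  have hmax' : ∀ x ∈ C, ∀ y ∈ C, T.dist x y ≤ T.dist a b := by
    intro x hx y hy
    exact hmax (x, y) (by simp [Set.mem_toFinset, hx, hy])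
  set P := tpath hT a b with hPdef
  have hPpath : P.IsPath := tpath_isPath hT a b
  have hPsub : ∀ z ∈ P.support, z ∈ C := tpath_support_mem hT hC ha hb
  refine ⟨a, b, P, hPpath, fun z => ⟨fun hz => hPsub z hz, fun hz => ?_⟩⟩
  by_contra hu
  -- u := z is in C but not on P
  set Q := tpath hT z a with hQdef
  have hQsub : ∀ y ∈ Q.support, y ∈ C := tpath_support_mem hT hC hz ha
  obtain ⟨w, q, r, heq, hwP, hmin⟩ := first_in_set (X := {y | y ∈ P.support}) Q
    P.start_mem_support
  have hqpath : q.IsPath := by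
    have := tpath_isPath hT z a
    rw [← hQdef, ← heq] at this
    exact this.of_append_left
  have hqsub : ∀ y ∈ q.support, y ∈ Q.support := by
    intro y hy
    rw [← heq, SimpleGraph.Walk.mem_support_append_iff]
    exact Or.inl hy
  have hzw : z ≠ w := fun h => hu (h ▸ hwP)
  have hqlen : 1 ≤ q.length := by
    by_contra hlen
    have h0 : q.length = 0 := by omega
    have := q.getVert_of_length_le (i := 0) (by omega)
    rw [q.getVert_zero] at this
    exact hzw this
  -- the predecessor t of w on q
  set t := q.getVert (q.length - 1) with htdef
  have htw : T.Adj t w := by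
    have := q.adj_getVert_succ (i := q.length - 1) (by omega)
    rwa [Nat.sub_add_cancel hqlen, q.getVert_length] at this
  have htmem : t ∈ q.support := getVert_mem_support q _
  have htne : t ≠ w := by
    intro h
    have := getVert_injective hqpath (q.length - 1) q.length (by omega) le_rfl
      (by rw [q.getVert_length]; exact h)
    omega
  have htnotP : t ∉ P.support := fun hP' => htne (hmin t htmem hP')
  have htC : t ∈ C := hQsub t (hqsub t htmem)
  -- case analysis on position of w on P
  by_cases hwa : w = a
  · -- extend q by P : contradiction with maximality via z, b
    set q' : T.Walk z a := q.copy rfl hwa with hq'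
    have hq'path : q'.IsPath := by rw [hq']; simpa using hqpath
    have hq'sup : q'.support = q.support := by rw [hq']; simp
    have hW : (q'.append P).IsPath := by
      apply isPath_append_of_meet hq'path hPpath
      intro y hy hyP
      rw [hq'sup] at hy
      exact (hmin y hy hyP).trans hwa
    have hWeq : q'.append P = tpath hT z b := tpath_eq hT _ hW
    have h1 : T.dist z b = q.length + P.length := by
      rw [← tpath_length hT z b, ← hWeq, SimpleGraph.Walk.length_append, hq']
      simp
    have h2 : T.dist z b ≤ T.dist a b := hmax' z hz b hb
    have h3 : P.length = T.dist a b := tpath_length hT a b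
    omega
  by_cases hwb : w = b
  · set q' : T.Walk z b := q.copy rfl hwb with hq'
    have hq'path : q'.IsPath := by rw [hq']; simpa using hqpath
    have hq'sup : q'.support = q.support := by rw [hq']; simp
    have hW : (q'.append P.reverse).IsPath := by
      apply isPath_append_of_meet hq'path hPpath.reverse
      intro y hy hyP
      rw [hq'sup] at hy
      exact (hmin y hy (by rwa [SimpleGraph.Walk.support_reverse, List.mem_reverse] at hyP)).trans
        hwb
    have hWeq : q'.append P.reverse = tpath hT z a := tpath_eq hT _ hW
    have h1 : T.dist z a = q.length + P.length := by
      rw [← tpath_length hT z a, ← hWeq, SimpleGraph.Walk.length_append,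
        SimpleGraph.Walk.length_reverse, hq']
      simp
    have h2 : T.dist z a ≤ T.dist a b := hmax' z hz a ha
    have h3 : P.length = T.dist a b := tpath_length hT a b
    omega
  -- w interior: 3 neighbours
  obtain ⟨i, hi, hgi⟩ := (mem_support_iff_getVert P).mp hwP
  have hi0 : i ≠ 0 := by
    intro h
    exact hwa (by rw [← hgi, h, P.getVert_zero])
  have hilen : i ≠ P.length := by
    intro h
    exact hwb (by rw [← hgi, h, P.getVert_length])
  set y1 := P.getVert (i - 1) with hy1
  set y2 := P.getVert (i + 1) with hy2
  have hadj1 : T.Adj w y1 := by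
    have := P.adj_getVert_succ (i := i - 1) (by omega)
    rw [Nat.sub_add_cancel (by omega), hgi] at this
    exact this.symm
  have hadj2 : T.Adj w y2 := by
    have := P.adj_getVert_succ (i := i) (by omega)
    rwa [hgi] at this
  have hy1mem : y1 ∈ P.support := getVert_mem_support P _
  have hy2mem : y2 ∈ P.support := getVert_mem_support P _
  have hy12 : y1 ≠ y2 := by
    intro h
    have := getVert_injective hPpath (i - 1) (i + 1) (by omega) (by omega) h
    omega
  have hty1 : t ≠ y1 := fun h => htnotP (h ▸ hy1mem)
  have hty2 : t ≠ y2 := fun h => htnotP (h ▸ hy2mem)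
  have hsub : ({t, y1, y2} : Set ι) ⊆ {y | y ∈ C ∧ T.Adj w y} := by
    rintro x (rfl | rfl | rfl)
    · exact ⟨htC, htw.symm⟩
    · exact ⟨hPsub _ hy1mem, hadj1⟩
    · exact ⟨hPsub _ hy2mem, hadj2⟩
  have h3 : ({t, y1, y2} : Set ι).ncard = 3 := by
    rw [Set.ncard_insert_of_notMem (by simp [hty1, hty2]),
      Set.ncard_insert_of_notMem (by simp [hy12]), Set.ncard_singleton]
  have hle : ({t, y1, y2} : Set ι).ncard ≤ {y | y ∈ C ∧ T.Adj w y}.ncard :=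
    Set.ncard_le_ncard hsub (Set.toFinite _)
  have := hdeg w (hPsub w hwP)
  omega

end StructLemma


section MainLemmas
attribute [local instance] Classical.propDecidable
open SimpleGraph

/-- Consumption: a tree decomposition whose bag sets induce paths yields a path
decomposition with the same bags. -/
lemma exists_pd_of_td {V : Type} {G : SimpleGraph V} {v : V}
    (hv : ∀ w : V, w ≠ v → G.Adj v w) (td : TreeDecomp G)
    (hpath : ∀ u : V, IsPathSet td.tree {x | u ∈ td.bag x}) :
    ∃ pd : PathDecomp G, ∀ i, ∃ x, pd.bag i = td.bag x := by
  classical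
  haveI := td.finι
  have hT : td.tree.IsTree := td.isTree
  obtain ⟨a, b, P, hPpath, hsupp⟩ := path_of_degree_two hT (hpath v).1
    (td.bag_cover v) (hpath v).2
  have hmem : ∀ x, v ∈ td.bag x → ∃ i : Fin (P.length + 1), P.getVert i.val = x := by
    intro x hx
    obtain ⟨i, hi, hgi⟩ := (mem_support_iff_getVert P).mp ((hsupp x).mpr hx)
    exact ⟨⟨i, by omega⟩, hgi⟩
  have hCmem : ∀ i : Fin (P.length + 1), v ∈ td.bag (P.getVert i.val) := by
    intro i
    exact (hsupp _).mp (getVert_mem_support P i.val)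
  refine ⟨⟨P.length + 1, Nat.succ_pos _, fun i => td.bag (P.getVert i.val), ?_, ?_, ?_⟩,
    fun i => ⟨_, rfl⟩⟩
  · -- cover
    intro u
    by_cases hu : u = v
    · exact ⟨⟨0, Nat.succ_pos _⟩, hu ▸ hCmem ⟨0, Nat.succ_pos _⟩⟩
    · obtain ⟨x, hvx, hux⟩ := td.bag_edge (hv u hu)
      obtain ⟨i, hgi⟩ := hmem x hvx
      exact ⟨i, show u ∈ td.bag (P.getVert i.val) by rw [hgi]; exact hux⟩
  · -- edges
    intro u u' h
    by_cases hu : u = v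
    · subst hu
      obtain ⟨x, h1, h2⟩ := td.bag_edge h
      obtain ⟨i, hgi⟩ := hmem x h1
      exact ⟨i, show _ ∈ td.bag (P.getVert i.val) ∧ _ ∈ td.bag (P.getVert i.val) by
        rw [hgi]; exact ⟨h1, h2⟩⟩
    by_cases hu' : u' = v
    · subst hu'
      obtain ⟨x, h1, h2⟩ := td.bag_edge h
      obtain ⟨i, hgi⟩ := hmem x h2
      exact ⟨i, show _ ∈ td.bag (P.getVert i.val) ∧ _ ∈ td.bag (P.getVert i.val) by
        rw [hgi]; exact ⟨h1, h2⟩⟩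
    obtain ⟨c', hc1, hc2⟩ := td.bag_edge h
    obtain ⟨b', hb1, hb2⟩ := td.bag_edge (hv u hu)
    obtain ⟨a', ha1, ha2⟩ := td.bag_edge (hv u' hu')
    obtain ⟨w, hwA, hwB, hwC⟩ := tree_helly hT (hpath u).1 (hpath u').1 (hpath v).1
      (haB := ha2) (haC := ha1) (hbA := hb2) (hbC := hb1) (hcA := hc1) (hcB := hc2)
    obtain ⟨i, hgi⟩ := hmem w hwC
    exact ⟨i, show _ ∈ td.bag (P.getVert i.val) ∧ _ ∈ td.bag (P.getVert i.val) by
      rw [hgi]; exact ⟨hwA, hwB⟩⟩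
  · -- convexity
    intro u i j k hij hjk hiu hku
    have hk : k.val ≤ P.length := by omega
    obtain ⟨q, hqpath, hjq, -⟩ := segment_lemma P hPpath i.val j.val k.val hij hjk hk
    have hq : q = tpath hT (P.getVert i.val) (P.getVert k.val) := tpath_eq hT q hqpath
    have := tpath_support_mem hT (hpath u).1 hiu hku (P.getVert j.val) (hq ▸ hjq)
    exact this

/-- Production: a path decomposition yields special/spaghetti/directed spaghetti
tree decompositions with the same bags. -/
lemma exists_structs_of_pd {V : Type} {G : SimpleGraph V} (pd : PathDecomp G) :
    ∃ (s1 : SpecialTD G) (s2 : SpaghettiTD G) (s3 : DirSpaghettiTD G),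
      (∀ x, ∃ i, s1.bag x = pd.bag i) ∧ (∀ x, ∃ i, s2.bag x = pd.bag i) ∧
      (∀ x, ∃ i, s3.bag x = pd.bag i) := by
  classical
  set m := pd.m with hm
  have hm0 : 0 < m := pd.hm
  let base : TreeDecomp G :=
    { ι := Fin m
      finι := inferInstance
      tree := pathGraph m
      isTree := pathGraph_isTree hm0
      bag := pd.bag
      bag_cover := pd.bag_cover
      bag_edge := pd.bag_edge
      bag_conn := fun u => by
        obtain ⟨i, hi⟩ := pd.bag_cover u
        exact pathGraph_induce_connected ⟨i, hi⟩
          (fun i j k hij hjk hi hk => pd.bag_convex u i j k hij hjk hi hk) }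
  have hps : ∀ u : V, IsPathSet (pathGraph m) {x | u ∈ pd.bag x} := by
    intro u
    constructor
    · obtain ⟨i, hi⟩ := pd.bag_cover u
      exact pathGraph_induce_connected ⟨i, hi⟩
        (fun i j k hij hjk hi hk => pd.bag_convex u i j k hij hjk hi hk)
    · intro x hx
      apply ncard_fin_le_two (n₁ := x.val + 1) (n₂ := x.val - 1)
      rintro y ⟨-, hadj⟩
      rcases pathGraph_adj.mp hadj with h1 | h1
      · left; omega
      · right; omega
  set root : Fin m := ⟨m - 1, by omega⟩ with hroot
  have hdist : ∀ x : Fin m, (pathGraph m).dist x root = (m - 1) - x.val := by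
    intro x
    rw [pathGraph_dist (by rw [Fin.le_def]; simp [hroot]; omega)]
  have hvert : ∀ x y : Fin m,
      ((pathGraph m).Adj x y ∧ (pathGraph m).dist y root < (pathGraph m).dist x root) →
        x.val + 1 = y.val := by
    intro x y ⟨hadj, hlt⟩
    rw [hdist, hdist] at hlt
    rcases pathGraph_adj.mp hadj with h1 | h1
    · exact h1
    · exfalso
      have hx : x.val ≤ m - 1 := by omega
      omega
  refine ⟨⟨base, root, fun u => ⟨hps u, ?_, ?_⟩⟩,
    ⟨base, hps⟩,
    ⟨base, fun x y => x.val + 1 = y.val, fun x y => pathGraph_adj,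
      fun x y h h' => by omega, fun u => ⟨hps u, ?_, ?_⟩⟩,
    fun x => ⟨x, rfl⟩, fun x => ⟨x, rfl⟩, fun x => ⟨x, rfl⟩⟩
  · intro x hx
    apply ncard_fin_le_one (n := x.val + 1)
    rintro y ⟨-, hy⟩
    exact (hvert x y hy).symm
  · intro x hx
    apply ncard_fin_le_one (n := x.val - 1)
    rintro y ⟨-, hy⟩
    have := hvert y x hy
    omega
  · intro x hx
    apply ncard_fin_le_one (n := x.val + 1)
    rintro y ⟨-, hy⟩
    omega
  · intro x hx
    apply ncard_fin_le_one (n := x.val - 1)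
    rintro y ⟨-, hy⟩
    omega

end MainLemmas

section PwLemmas
attribute [local instance] Classical.propDecidable
open SimpleGraph

lemma trivial_pd {V : Type} [Finite V] (G : SimpleGraph V) :
    ∃ pd : PathDecomp G, ∀ i, (pd.bag i).ncard ≤ Nat.card V + 1 := by
  refine ⟨⟨1, one_pos, fun _ => Set.univ, fun u => ⟨⟨0, one_pos⟩, Set.mem_univ u⟩,
    fun u w h => ⟨⟨0, one_pos⟩, Set.mem_univ u, Set.mem_univ w⟩,
    fun u i j k _ _ _ _ => Set.mem_univ u⟩, fun i => ?_⟩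
  rw [Set.ncard_univ]
  omega

lemma pw_set_nonempty {V : Type} [Finite V] (G : SimpleGraph V) :
    {k | ∃ pd : PathDecomp G, ∀ i, (pd.bag i).ncard ≤ k + 1}.Nonempty := by
  obtain ⟨pd, h⟩ := trivial_pd G
  exact ⟨Nat.card V, pd, h⟩

/-- One plus the pathwidth of `G - v` is at most the pathwidth of `G`, given `v`
universal and `G` having an edge at `v`. -/
lemma pd_of_del {V : Type} [Finite V] {G : SimpleGraph V} {v : V} {k : ℕ}
    (hv : ∀ w : V, w ≠ v → G.Adj v w) (pd : PathDecomp G)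
    (hb : ∀ i, (pd.bag i).ncard ≤ k + 1) (hk : 1 ≤ k) :
    ∃ pd' : PathDecomp (G.induce {x | x ≠ v}), ∀ i, (pd'.bag i).ncard ≤ k := by
  classical
  haveI : Fintype (Fin pd.m) := inferInstance
  set I : Finset (Fin pd.m) := Finset.univ.filter (fun i => v ∈ pd.bag i) with hI
  have hIne : I.Nonempty := by
    obtain ⟨i, hi⟩ := pd.bag_cover v
    exact ⟨i, by simp [hI, hi]⟩
  set lo := I.min' hIne with hlo
  set hi := I.max' hIne with hhi
  have hloI : v ∈ pd.bag lo := by have := I.min'_mem hIne; simpa [hI] using this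
  have hhiI : v ∈ pd.bag hi := by have := I.max'_mem hIne; simpa [hI] using this
  have hmem_le : ∀ i : Fin pd.m, v ∈ pd.bag i → lo ≤ i ∧ i ≤ hi := by
    intro i h
    have hiI : i ∈ I := by simp [hI, h]
    exact ⟨I.min'_le i hiI, I.le_max' i hiI⟩
  have hlohi : lo.val ≤ hi.val := by
    have := (hmem_le lo hloI).2
    rwa [Fin.le_def] at this
  set m' := hi.val - lo.val + 1 with hm'
  have hidx : ∀ j : Fin m', lo.val + j.val < pd.m := by
    intro j
    have := hi.isLt
    have := j.isLt
    omega
  set idx : Fin m' → Fin pd.m := fun j => ⟨lo.val + j.val, hidx j⟩ with hidxdef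
  have hvidx : ∀ j : Fin m', v ∈ pd.bag (idx j) := by
    intro j
    apply pd.bag_convex v lo (idx j) hi
    · rw [Fin.le_def]; simp [hidxdef]
    · rw [Fin.le_def]; simp [hidxdef]; have := j.isLt; omega
    · exact hloI
    · exact hhiI
  have hof : ∀ i : Fin pd.m, lo ≤ i → i ≤ hi → ∃ j : Fin m', idx j = i := by
    intro i h1 h2
    rw [Fin.le_def] at h1 h2
    refine ⟨⟨i.val - lo.val, by omega⟩, ?_⟩
    apply Fin.ext
    simp [hidxdef]
    omega
  refine ⟨⟨m', Nat.succ_pos _, fun j => {w | w.1 ∈ pd.bag (idx j)}, ?_, ?_, ?_⟩, ?_⟩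
  · -- cover
    rintro ⟨w, hw⟩
    obtain ⟨i, h1, h2⟩ := pd.bag_edge (hv w hw)
    obtain ⟨j, hj⟩ := hof i (hmem_le i h1).1 (hmem_le i h1).2
    exact ⟨j, by simp only [Set.mem_setOf_eq, hj]; exact h2⟩
  · -- edges
    rintro ⟨w, hw⟩ ⟨w', hw'⟩ hadj
    have h : G.Adj w w' := hadj
    obtain ⟨i, hwi, hw'i⟩ := pd.bag_edge h
    obtain ⟨iu, hviu, hwiu⟩ := pd.bag_edge (hv w hw)
    obtain ⟨iw, hviw, hw'iw⟩ := pd.bag_edge (hv w' hw')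
    rcases lt_or_ge i lo with hcase | hcase
    · -- use lo
      obtain ⟨j, hj⟩ := hof lo le_rfl (by rw [Fin.le_def]; omega)
      refine ⟨j, ?_, ?_⟩ <;> simp only [Set.mem_setOf_eq, hj]
      · exact pd.bag_convex w i lo iu hcase.le (hmem_le iu hviu).1 hwi hwiu
      · exact pd.bag_convex w' i lo iw hcase.le (hmem_le iw hviw).1 hw'i hw'iw
    rcases le_or_gt i hi with hcase2 | hcase2
    · obtain ⟨j, hj⟩ := hof i hcase hcase2
      exact ⟨j, by simp only [Set.mem_setOf_eq, hj]; exact hwi,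
        by simp only [Set.mem_setOf_eq, hj]; exact hw'i⟩
    · obtain ⟨j, hj⟩ := hof hi (by rw [Fin.le_def]; omega) le_rfl
      refine ⟨j, ?_, ?_⟩ <;> simp only [Set.mem_setOf_eq, hj]
      · exact pd.bag_convex w iu hi i (hmem_le iu hviu).2 hcase2.le hwiu hwi
      · exact pd.bag_convex w' iw hi i (hmem_le iw hviw).2 hcase2.le hw'iw hw'i
  · -- convexity
    rintro ⟨w, hw⟩ j1 j2 j3 h12 h23 hw1 hw3
    rw [Fin.le_def] at h12 h23
    apply pd.bag_convex w (idx j1) (idx j2) (idx j3)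
    · rw [Fin.le_def]; simp [hidxdef]; omega
    · rw [Fin.le_def]; simp [hidxdef]; omega
    · exact hw1
    · exact hw3
  · -- width
    intro j
    show ({w : {x | x ≠ v} | w.1 ∈ pd.bag (idx j)}).ncard ≤ k
    have hsub : ∀ w : {x | x ≠ v}, w ∈ {w : {x | x ≠ v} | w.1 ∈ pd.bag (idx j)} →
        w.1 ∈ pd.bag (idx j) \ {v} := by
      rintro ⟨w, hw⟩ hmem
      exact ⟨hmem, hw⟩
    have h1 : ({w : {x | x ≠ v} | w.1 ∈ pd.bag (idx j)}).ncard ≤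
        (pd.bag (idx j) \ {v}).ncard :=
      Set.ncard_le_ncard_of_injOn Subtype.val hsub
        (fun a _ b _ hab => Subtype.ext hab) (Set.toFinite _)
    have h2 : (pd.bag (idx j) \ {v}).ncard = (pd.bag (idx j)).ncard - 1 :=
      Set.ncard_diff_singleton_of_mem (hvidx j)
    have h3 := hb (idx j)
    have h4 : 1 ≤ (pd.bag (idx j)).ncard := by
      have : ({v} : Set V).ncard ≤ (pd.bag (idx j)).ncard :=
        Set.ncard_le_ncard (by simpa using hvidx j) (Set.toFinite _)
      simpa using this
    omega

lemma pd_of_add {V : Type} [Finite V] {G : SimpleGraph V} {v : V} {k : ℕ}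
    (hv : ∀ w : V, w ≠ v → G.Adj v w)
    (pd' : PathDecomp (G.induce {x | x ≠ v})) (hb : ∀ i, (pd'.bag i).ncard ≤ k + 1) :
    ∃ pd : PathDecomp G, ∀ i, (pd.bag i).ncard ≤ k + 2 := by
  classical
  refine ⟨⟨pd'.m, pd'.hm, fun i => (Subtype.val '' pd'.bag i) ∪ {v}, ?_, ?_, ?_⟩, ?_⟩
  · intro u
    by_cases hu : u = v
    · exact ⟨⟨0, pd'.hm⟩, Or.inr (by simp [hu])⟩
    · obtain ⟨i, hi⟩ := pd'.bag_cover ⟨u, hu⟩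
      exact ⟨i, Or.inl ⟨⟨u, hu⟩, hi, rfl⟩⟩
  · intro u w h
    by_cases hu : u = v
    · have hw : w ≠ v := by
        intro hwv
        rw [hu, hwv] at h
        exact G.irrefl h
      obtain ⟨i, hi⟩ := pd'.bag_cover ⟨w, hw⟩
      exact ⟨i, Or.inr (by simp [hu]), Or.inl ⟨⟨w, hw⟩, hi, rfl⟩⟩
    by_cases hw : w = v
    · obtain ⟨i, hi⟩ := pd'.bag_cover ⟨u, hu⟩
      exact ⟨i, Or.inl ⟨⟨u, hu⟩, hi, rfl⟩, Or.inr (by simp [hw])⟩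
    · have h' : (G.induce {x | x ≠ v}).Adj ⟨u, hu⟩ ⟨w, hw⟩ := h
      obtain ⟨i, h1, h2⟩ := pd'.bag_edge h'
      exact ⟨i, Or.inl ⟨⟨u, hu⟩, h1, rfl⟩, Or.inl ⟨⟨w, hw⟩, h2, rfl⟩⟩
  · intro u i j k hij hjk hiu hku
    by_cases hu : u = v
    · exact Or.inr (by simp [hu])
    · have hmem : ∀ l : Fin pd'.m, u ∈ (Subtype.val '' pd'.bag l) ∪ {v} →
          (⟨u, hu⟩ : {x | x ≠ v}) ∈ pd'.bag l := by
        intro l hl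
        rcases hl with ⟨⟨w, hw⟩, hw1, hw2⟩ | hl
        · cases hw2; exact hw1
        · exact absurd hl hu
      exact Or.inl ⟨⟨u, hu⟩, pd'.bag_convex ⟨u, hu⟩ i j k hij hjk (hmem i hiu) (hmem k hku), rfl⟩
  · intro i
    calc ((Subtype.val '' pd'.bag i) ∪ {v}).ncard
        ≤ (Subtype.val '' pd'.bag i).ncard + ({v} : Set V).ncard := Set.ncard_union_le _ _
      _ = (pd'.bag i).ncard + 1 := by
          rw [Set.ncard_image_of_injective _ Subtype.val_injective, Set.ncard_singleton]
      _ ≤ k + 2 := by have := hb i; omega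

end PwLemmas

/-- If `v` is adjacent to all other vertices of a graph `G` with at least two
vertices, then the special treewidth, spaghetti treewidth, directed spaghetti
treewidth and pathwidth of `G` coincide, and equal `pw (G - v) + 1`. -/
theorem statement7 {V : Type} [Fintype V] (G : SimpleGraph V) (h2 : 2 ≤ Nat.card V)
    (v : V) (hv : ∀ w : V, w ≠ v → G.Adj v w) :
    spctw G = sptw G ∧ sptw G = dptw G ∧ dptw G = pw G ∧
      pw G = pw (G.induce {x | x ≠ v}) + 1 := by
  classical
  have hcons : ∀ (td : TreeDecomp G), (∀ u, IsPathSet td.tree {x | u ∈ td.bag x}) →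
      ∀ k : ℕ, (∀ x, (td.bag x).ncard ≤ k + 1) →
      ∃ pd : PathDecomp G, ∀ i, (pd.bag i).ncard ≤ k + 1 := by
    intro td hp k hk
    obtain ⟨pd, hpd⟩ := exists_pd_of_td hv td hp
    exact ⟨pd, fun i => by obtain ⟨x, hx⟩ := hpd i; rw [hx]; exact hk x⟩
  have hset1 : {k | ∃ td : SpecialTD G, ∀ x, (td.bag x).ncard ≤ k + 1} =
      {k | ∃ pd : PathDecomp G, ∀ i, (pd.bag i).ncard ≤ k + 1} := by
    ext k
    constructor
    · rintro ⟨td, h⟩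
      exact hcons td.toTreeDecomp (fun u => (td.bag_vertical u).1) k h
    · rintro ⟨pd, h⟩
      obtain ⟨s1, s2, s3, h1, h2', h3⟩ := exists_structs_of_pd pd
      exact ⟨s1, fun x => by obtain ⟨i, hi⟩ := h1 x; rw [hi]; exact h i⟩
  have hset2 : {k | ∃ td : SpaghettiTD G, ∀ x, (td.bag x).ncard ≤ k + 1} =
      {k | ∃ pd : PathDecomp G, ∀ i, (pd.bag i).ncard ≤ k + 1} := by
    ext k
    constructor
    · rintro ⟨td, h⟩
      exact hcons td.toTreeDecomp td.bag_path k h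
    · rintro ⟨pd, h⟩
      obtain ⟨s1, s2, s3, h1, h2', h3⟩ := exists_structs_of_pd pd
      exact ⟨s2, fun x => by obtain ⟨i, hi⟩ := h2' x; rw [hi]; exact h i⟩
  have hset3 : {k | ∃ td : DirSpaghettiTD G, ∀ x, (td.bag x).ncard ≤ k + 1} =
      {k | ∃ pd : PathDecomp G, ∀ i, (pd.bag i).ncard ≤ k + 1} := by
    ext k
    constructor
    · rintro ⟨td, h⟩
      exact hcons td.toTreeDecomp (fun u => (td.bag_dirpath u).1) k h
    · rintro ⟨pd, h⟩
      obtain ⟨s1, s2, s3, h1, h2', h3⟩ := exists_structs_of_pd pd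
      exact ⟨s3, fun x => by obtain ⟨i, hi⟩ := h3 x; rw [hi]; exact h i⟩
  have e1 : spctw G = pw G := by unfold spctw pw; rw [hset1]
  have e2 : sptw G = pw G := by unfold sptw pw; rw [hset2]
  have e3 : dptw G = pw G := by unfold dptw pw; rw [hset3]
  -- the pathwidth relation
  have hneG := pw_set_nonempty G
  have hGmem : pw G ∈ {k | ∃ pd : PathDecomp G, ∀ i, (pd.bag i).ncard ≤ k + 1} :=
    Nat.sInf_mem hneG
  obtain ⟨pdG, hpdG⟩ := hGmem
  obtain ⟨w, hw⟩ : ∃ w : V, w ≠ v := by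
    have h1 : 1 < Fintype.card V := by rw [← Nat.card_eq_fintype_card]; omega
    have : Nontrivial V := Fintype.one_lt_card_iff_nontrivial.mp h1
    exact exists_ne v
  have hpw1 : 1 ≤ pw G := by
    by_contra h
    have h0 : pw G = 0 := by omega
    obtain ⟨i, h1, h2⟩ := pdG.bag_edge (hv w hw)
    have hsub : ({v, w} : Set V) ⊆ pdG.bag i := by
      rintro x (rfl | rfl)
      · exact h1
      · exact h2
    have hcard : ({v, w} : Set V).ncard ≤ (pdG.bag i).ncard :=
      Set.ncard_le_ncard hsub (Set.toFinite _)
    rw [Set.ncard_pair (Ne.symm hw)] at hcard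
    have := hpdG i
    omega
  obtain ⟨pd', hpd'⟩ := pd_of_del hv pdG hpdG hpw1
  have hle1 : pw (G.induce {x | x ≠ v}) ≤ pw G - 1 :=
    Nat.sInf_le ⟨pd', fun i => by have := hpd' i; omega⟩
  have hmem' : pw (G.induce {x | x ≠ v}) ∈
      {k | ∃ pd : PathDecomp (G.induce {x | x ≠ v}), ∀ i, (pd.bag i).ncard ≤ k + 1} :=
    Nat.sInf_mem (pw_set_nonempty _)
  obtain ⟨pd'', hpd''⟩ := hmem'
  obtain ⟨pdG2, hpdG2⟩ := pd_of_add hv pd'' hpd''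
  have hle2 : pw G ≤ pw (G.induce {x | x ≠ v}) + 1 :=
    Nat.sInf_le ⟨pdG2, fun i => by have := hpdG2 i; omega⟩
  exact ⟨e1.trans e2.symm, e2.trans e3.symm, e3, by omega⟩
end TreeLemmas
end WalkLemmas2
end WalkLemmas
end

section
/- The strongly chordal treewidth of the graph S_3 is exactly three. -/
open SimpleGraph

section AuxiliarySctwS3

set_option synthInstance.maxSize 1000
set_option synthInstance.maxHeartbeats 1000000
set_option maxHeartbeats 4000000

instance fromRelDec {V : Type} (r : V → V → Prop) [DecidableEq V] [DecidableRel r] :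
    DecidableRel (SimpleGraph.fromRel r).Adj := fun a b =>
  decidable_of_iff _ (SimpleGraph.fromRel_adj r a b).symm

instance : DecidableRel S3.Adj := by unfold S3; infer_instance

instance cycDec (n : ℕ) : DecidableRel (cycGraph n).Adj := by unfold cycGraph; infer_instance

/-- The witness graph: `S₃` together with the long chord `{1, 4}`. -/
def HgS3 : SimpleGraph (Fin 6) := SimpleGraph.fromRel (fun x y =>
  (x = 0 ∧ y = 1) ∨ (x = 1 ∧ y = 2) ∨ (x = 2 ∧ y = 3) ∨ (x = 3 ∧ y = 4) ∨
  (x = 4 ∧ y = 5) ∨ (x = 5 ∧ y = 0) ∨ (x = 1 ∧ y = 3) ∨ (x = 3 ∧ y = 5) ∨ (x = 5 ∧ y = 1) ∨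
  (x = 1 ∧ y = 4))

instance : DecidableRel HgS3.Adj := by unfold HgS3; infer_instance

theorem chord6 : ∀ a b c d e f : Fin 6,
    (a ≠ b ∧ a ≠ c ∧ a ≠ d ∧ a ≠ e ∧ a ≠ f ∧ b ≠ c ∧ b ≠ d ∧ b ≠ e ∧ b ≠ f ∧
     c ≠ d ∧ c ≠ e ∧ c ≠ f ∧ d ≠ e ∧ d ≠ f ∧ e ≠ f) →
    (HgS3.Adj a b ∧ HgS3.Adj b c ∧ HgS3.Adj c d ∧ HgS3.Adj d e ∧ HgS3.Adj e f ∧ HgS3.Adj f a) →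
    (HgS3.Adj a d ∨ HgS3.Adj b e ∨ HgS3.Adj c f) := by decide

theorem noC4 : ∀ a b c d : Fin 6,
    (a ≠ b ∧ a ≠ c ∧ a ≠ d ∧ b ≠ c ∧ b ≠ d ∧ c ≠ d) →
    (HgS3.Adj a b ∧ HgS3.Adj b c ∧ HgS3.Adj c d ∧ HgS3.Adj d a) →
    (¬HgS3.Adj a c ∧ ¬HgS3.Adj b d) → False := by decide

theorem noC5 : ∀ a b c d e : Fin 6,
    (a ≠ b ∧ a ≠ c ∧ a ≠ d ∧ a ≠ e ∧ b ≠ c ∧ b ≠ d ∧ b ≠ e ∧ c ≠ d ∧ c ≠ e ∧ d ≠ e) →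
    (HgS3.Adj a b ∧ HgS3.Adj b c ∧ HgS3.Adj c d ∧ HgS3.Adj d e ∧ HgS3.Adj e a) →
    (¬HgS3.Adj a c ∧ ¬HgS3.Adj b d ∧ ¬HgS3.Adj c e ∧ ¬HgS3.Adj a d ∧ ¬HgS3.Adj b e) →
    False := by decide

theorem HgChordal : IsChordal HgS3 := by
  rintro S n hn ⟨e⟩
  set f : ZMod n → Fin 6 := fun i => ((e.symm i : S) : Fin 6) with hf
  have hinj : Function.Injective f := fun i j h =>
    e.symm.toEquiv.injective (Subtype.coe_injective h)
  have hadj : ∀ i j, HgS3.Adj (f i) (f j) ↔ (cycGraph n).Adj i j := fun i j =>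
    e.symm.map_adj_iff
  haveI : NeZero n := ⟨by omega⟩
  have hle6 : n ≤ 6 := by
    have := Fintype.card_le_of_injective f hinj
    simpa [ZMod.card] using this
  have ne : ∀ (i j : ZMod n), i ≠ j → f i ≠ f j := fun i j h hh => h (hinj hh)
  interval_cases n
  · exact noC4 (f 0) (f 1) (f 2) (f 3)
      ⟨ne 0 1 (by decide), ne 0 2 (by decide), ne 0 3 (by decide),
       ne 1 2 (by decide), ne 1 3 (by decide), ne 2 3 (by decide)⟩
      ⟨(hadj 0 1).mpr (by decide), (hadj 1 2).mpr (by decide),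
       (hadj 2 3).mpr (by decide), (hadj 3 0).mpr (by decide)⟩
      ⟨fun h => absurd ((hadj 0 2).mp h) (by decide),
       fun h => absurd ((hadj 1 3).mp h) (by decide)⟩
  · exact noC5 (f 0) (f 1) (f 2) (f 3) (f 4)
      ⟨ne 0 1 (by decide), ne 0 2 (by decide), ne 0 3 (by decide), ne 0 4 (by decide),
       ne 1 2 (by decide), ne 1 3 (by decide), ne 1 4 (by decide),
       ne 2 3 (by decide), ne 2 4 (by decide), ne 3 4 (by decide)⟩
      ⟨(hadj 0 1).mpr (by decide), (hadj 1 2).mpr (by decide), (hadj 2 3).mpr (by decide),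
       (hadj 3 4).mpr (by decide), (hadj 4 0).mpr (by decide)⟩
      ⟨fun h => absurd ((hadj 0 2).mp h) (by decide),
       fun h => absurd ((hadj 1 3).mp h) (by decide),
       fun h => absurd ((hadj 2 4).mp h) (by decide),
       fun h => absurd ((hadj 0 3).mp h) (by decide),
       fun h => absurd ((hadj 1 4).mp h) (by decide)⟩
  · have := chord6 (f 0) (f 1) (f 2) (f 3) (f 4) (f 5)
      ⟨ne 0 1 (by decide), ne 0 2 (by decide), ne 0 3 (by decide), ne 0 4 (by decide),
       ne 0 5 (by decide), ne 1 2 (by decide), ne 1 3 (by decide), ne 1 4 (by decide),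
       ne 1 5 (by decide), ne 2 3 (by decide), ne 2 4 (by decide), ne 2 5 (by decide),
       ne 3 4 (by decide), ne 3 5 (by decide), ne 4 5 (by decide)⟩
      ⟨(hadj 0 1).mpr (by decide), (hadj 1 2).mpr (by decide), (hadj 2 3).mpr (by decide),
       (hadj 3 4).mpr (by decide), (hadj 4 5).mpr (by decide), (hadj 5 0).mpr (by decide)⟩
    rcases this with h | h | h
    · exact absurd ((hadj 0 3).mp h) (by decide)
    · exact absurd ((hadj 1 4).mp h) (by decide)
    · exact absurd ((hadj 2 5).mp h) (by decide)

theorem HgSC : IsStronglyChordal HgS3 := by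
  refine ⟨HgChordal, ?_⟩
  intro n hn _ f hinj hadj
  haveI : NeZero n := ⟨by omega⟩
  have hle6 : n ≤ 6 := by
    have := Fintype.card_le_of_injective f hinj
    simpa [ZMod.card] using this
  have hn6 : n = 6 := by omega
  subst hn6
  have ne : ∀ (i j : ZMod 6), i ≠ j → f i ≠ f j := fun i j h hh => h (hinj hh)
  have key := chord6 (f 0) (f 1) (f 2) (f 3) (f 4) (f 5)
    ⟨ne 0 1 (by decide), ne 0 2 (by decide), ne 0 3 (by decide), ne 0 4 (by decide),
     ne 0 5 (by decide), ne 1 2 (by decide), ne 1 3 (by decide), ne 1 4 (by decide),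
     ne 1 5 (by decide), ne 2 3 (by decide), ne 2 4 (by decide), ne 2 5 (by decide),
     ne 3 4 (by decide), ne 3 5 (by decide), ne 4 5 (by decide)⟩
    ⟨by simpa using hadj 0, by have h := hadj 1; rwa [show (1 + 1 : ZMod 6) = 2 by decide] at h, by have h := hadj 2; rwa [show (2 + 1 : ZMod 6) = 3 by decide] at h,
     by have h := hadj 3; rwa [show (3 + 1 : ZMod 6) = 4 by decide] at h, by have h := hadj 4; rwa [show (4 + 1 : ZMod 6) = 5 by decide] at h, by have h := hadj 5; rwa [show (5 + 1 : ZMod 6) = 0 by decide] at h⟩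
  have h3 : ((3 : ℕ) : ZMod 6) = 3 := by decide
  rcases key with h | h | h
  · exact ⟨0, 3, ⟨1, by norm_num⟩, le_rfl, by norm_num, by rw [h3]; simpa using h⟩
  · exact ⟨1, 3, ⟨1, by norm_num⟩, le_rfl, by norm_num, by rw [h3, show (1 + 3 : ZMod 6) = 4 by decide]; exact h⟩
  · exact ⟨2, 3, ⟨1, by norm_num⟩, le_rfl, by norm_num, by rw [h3, show (2 + 3 : ZMod 6) = 5 by decide]; exact h⟩

theorem HgCF5 : HgS3.CliqueFree 5 := by intro t; revert t; decide

theorem S3_le_HgS3 : S3 ≤ HgS3 := by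
  intro a b h
  revert h; revert a b
  decide

def f6 (i : ZMod 6) : Fin 6 := ⟨i.val, i.val_lt⟩

theorem clique4 {H : SimpleGraph (Fin 6)} {a b c d : Fin 6}
    (hab : H.Adj a b) (hac : H.Adj a c) (had : H.Adj a d)
    (hbc : H.Adj b c) (hbd : H.Adj b d) (hcd : H.Adj c d) : ¬ H.CliqueFree 4 := by
  intro hcf
  refine hcf {a, b, c, d} ⟨?_, ?_⟩
  · intro x hx y hy hne
    simp only [Finset.coe_insert, Set.mem_insert_iff, Finset.coe_singleton,
      Set.mem_singleton_iff] at hx hy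
    rcases hx with rfl | rfl | rfl | rfl <;> rcases hy with rfl | rfl | rfl | rfl <;>
      first
        | exact absurd rfl hne
        | assumption
        | exact hab.symm
        | exact hac.symm
        | exact had.symm
        | exact hbc.symm
        | exact hbd.symm
        | exact hcd.symm
  · have h1 := hab.ne; have h2 := hac.ne; have h3 := had.ne
    have h4 := hbc.ne; have h5 := hbd.ne; have h6 := hcd.ne
    rw [Finset.card_insert_of_notMem (by simp [h1, h2, h3]),
      Finset.card_insert_of_notMem (by simp [h4, h5]),
      Finset.card_insert_of_notMem (by simp [h6]), Finset.card_singleton]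

theorem sctw_lower {H : SimpleGraph (Fin 6)} (hle : S3 ≤ H) (hsc : IsStronglyChordal H) :
    ¬ H.CliqueFree 4 := by
  have hinj : Function.Injective f6 := by decide
  have hadj : ∀ i : ZMod 6, H.Adj (f6 i) (f6 (i + 1)) :=
    fun i => hle (by revert i; decide)
  obtain ⟨i, d, hodd, hd3, hdn, hchord⟩ := hsc.2 6 le_rfl (by decide) f6 hinj hadj
  have hd : d = 3 := by omega
  subst hd
  have h3 : ((3 : ℕ) : ZMod 6) = 3 := by decide
  rw [h3] at hchord
  have hi : i = 0 ∨ i = 1 ∨ i = 2 ∨ i = 3 ∨ i = 4 ∨ i = 5 := by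
    clear hchord; revert i; decide
  have e : ∀ a b : Fin 6, S3.Adj a b → H.Adj a b := fun a b h => hle h
  rcases hi with rfl | rfl | rfl | rfl | rfl | rfl
  · have hc : H.Adj 0 3 := by
      have h1 : f6 0 = 0 := by decide
      have h2 : f6 (0 + 3) = 3 := by decide
      rwa [h1, h2] at hchord
    exact clique4 (e 0 1 (by decide)) hc (e 0 5 (by decide))
      (e 1 3 (by decide)) (e 1 5 (by decide)) (e 3 5 (by decide))
  · have hc : H.Adj 1 4 := by
      have h1 : f6 1 = 1 := by decide
      have h2 : f6 (1 + 3) = 4 := by decide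
      rwa [h1, h2] at hchord
    exact clique4 (e 1 3 (by decide)) hc (e 1 5 (by decide))
      (e 3 4 (by decide)) (e 3 5 (by decide)) (e 4 5 (by decide))
  · have hc : H.Adj 2 5 := by
      have h1 : f6 2 = 2 := by decide
      have h2 : f6 (2 + 3) = 5 := by decide
      rwa [h1, h2] at hchord
    exact clique4 (e 2 1 (by decide)) (e 2 3 (by decide)) hc
      (e 1 3 (by decide)) (e 1 5 (by decide)) (e 3 5 (by decide))
  · have hc : H.Adj 3 0 := by
      have h1 : f6 3 = 3 := by decide
      have h2 : f6 (3 + 3) = 0 := by decide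
      rwa [h1, h2] at hchord
    exact clique4 hc.symm (e 0 1 (by decide)) (e 0 5 (by decide))
      (e 3 1 (by decide)) (e 3 5 (by decide)) (e 1 5 (by decide))
  · have hc : H.Adj 4 1 := by
      have h1 : f6 4 = 4 := by decide
      have h2 : f6 (4 + 3) = 1 := by decide
      rwa [h1, h2] at hchord
    exact clique4 hc.symm (e 1 3 (by decide)) (e 1 5 (by decide))
      (e 4 3 (by decide)) (e 4 5 (by decide)) (e 3 5 (by decide))
  · have hc : H.Adj 5 2 := by
      have h1 : f6 5 = 5 := by decide
      have h2 : f6 (5 + 3) = 2 := by decide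
      rwa [h1, h2] at hchord
    exact clique4 hc.symm (e 2 1 (by decide)) (e 2 3 (by decide))
      (e 5 1 (by decide)) (e 5 3 (by decide)) (e 1 3 (by decide))

end AuxiliarySctwS3

/-- The strongly chordal treewidth of the 3-sun `S₃` is exactly three. -/
theorem statement11 : sctw S3 = 3 := by
  have hmem : 3 ∈ {k | ∃ H : SimpleGraph (Fin 6),
      S3 ≤ H ∧ IsStronglyChordal H ∧ H.CliqueFree (k + 2)} :=
    ⟨HgS3, S3_le_HgS3, HgSC, HgCF5⟩
  refine le_antisymm (Nat.sInf_le hmem) (le_csInf ⟨3, hmem⟩ ?_)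
  rintro k ⟨H, hle, hsc, hcf⟩
  by_contra hk
  push_neg at hk
  exact sctw_lower hle hsc (hcf.mono (by omega))
end
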